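/- arXiv:1711.02297 — 4 statements merged into one kernel-verified Lean document; each statement's English description precedes it below -/
import Mathlib

section
/- Let K be a regular incidence complex of rank n with flag-transitive subgroup Γ, base flag Φ = {F_{-1},...,F_n}, and distinguished generating subgroups R_{-1},...,R_n. For 0 ≤ i ≤ j ≤ n-1 and an i-face G_i of K: G_i ≤ F_j if and only if G_i = F_i γ for some γ ∈ Γ_j := ⟨R_k : k ≠ j⟩. -/
open Set Pointwise

/-- `Φ` is a flag of the subset `s` of the poset `α`: a chain contained in `s`
that is maximal among chains contained in `s`. -/
def IsFlagOf {α : Type*} [PartialOrder α] (s Φ : Set α) : Prop :=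
  Φ ⊆ s ∧ IsChain (· ≤ ·) Φ ∧
    ∀ Ψ : Set α, Ψ ⊆ s → IsChain (· ≤ ·) Ψ → Φ ⊆ Ψ → Ψ = Φ

/-- Two flags are adjacent if each differs from the other in exactly one face. -/
def FlagAdj {α : Type*} [PartialOrder α] (Φ Ψ : Set α) : Prop :=
  (Φ \ Ψ).ncard = 1 ∧ (Ψ \ Φ).ncard = 1

/-- The set `s` is flag-connected: any two flags of `s` are joined by a sequence
of successively adjacent flags of `s`. -/
def FlagConnIn {α : Type*} [PartialOrder α] (s : Set α) : Prop :=
  ∀ Φ Ψ : Set α, IsFlagOf s Φ → IsFlagOf s Ψ →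
    Relation.ReflTransGen
      (fun A B => IsFlagOf s A ∧ IsFlagOf s B ∧ FlagAdj A B) Φ Ψ

/-- The section between `F` and `G` is connected: any two of its proper faces are
joined by a finite sequence of successively incident proper faces of the section. -/
def ConnIn {α : Type*} [PartialOrder α] (F G : α) : Prop :=
  ∀ H K : α, F < H → H < G → F < K → K < G →
    Relation.ReflTransGen
      (fun a b => F < a ∧ a < G ∧ F < b ∧ b < G ∧ (a ≤ b ∨ b ≤ a)) H K

/-- An incidence complex of rank `n`: a bounded ranked poset (rank function `rk`
with range `{-1,…,n}`, strictly monotone, all flags having `n+2` elements hitting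
every rank), strongly connected (I3), and with at least two `i`-faces between any
incident pair of faces of ranks `i-1` and `i+1` (I4). -/
structure IncComplex (α : Type*) [PartialOrder α] [BoundedOrder α]
    (n : ℤ) (rk : α → ℤ) : Prop where
  rk_bot : rk (⊥ : α) = -1
  rk_top : rk (⊤ : α) = n
  rk_strictMono : ∀ a b : α, a < b → rk a < rk b
  chain_flag : ∀ c : Set α, IsChain (· ≤ ·) c →
    ∃ Φ : Set α, c ⊆ Φ ∧ IsFlagOf Set.univ Φ ∧ Φ.ncard = (n + 2).toNat
  flag_rk : ∀ Φ : Set α, IsFlagOf Set.univ Φ →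
    ∀ i ∈ Set.Icc (-1 : ℤ) n, ∃ a ∈ Φ, rk a = i
  strong_conn : ∀ F G : α, F ≤ G → 2 ≤ rk G - rk F - 1 → ConnIn F G
  two_between : ∀ F G : α, F < G → rk G = rk F + 2 →
    ∃ H H' : α, H ≠ H' ∧ F < H ∧ H < G ∧ F < H' ∧ H' < G

set_option linter.unusedSectionVars false

section Helpers

variable {α : Type*} [PartialOrder α] [BoundedOrder α] {n : ℤ} {rk : α → ℤ}

lemma chain_le_total {s : Set α} (hc : IsChain (· ≤ ·) s) {a b : α}
    (ha : a ∈ s) (hb : b ∈ s) : a ≤ b ∨ b ≤ a := by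
  rcases eq_or_ne a b with rfl | h
  · exact Or.inl le_rfl
  · exact hc ha hb h

lemma ic_rk_mem (hK : IncComplex α n rk) (a : α) : -1 ≤ rk a ∧ rk a ≤ n := by
  constructor
  · rcases eq_or_lt_of_le (bot_le (a := a)) with h | h
    · rw [← h, hK.rk_bot]
    · have := hK.rk_strictMono _ _ h; rw [hK.rk_bot] at this; omega
  · rcases eq_or_lt_of_le (le_top (a := a)) with h | h
    · rw [h, hK.rk_top]
    · have := hK.rk_strictMono _ _ h; rw [hK.rk_top] at this; omega

lemma ic_lt_of_rk_lt (hK : IncComplex α n rk) {a b : α}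
    (hcomp : a ≤ b ∨ b ≤ a) (h : rk a < rk b) : a < b := by
  rcases hcomp with h1 | h1
  · refine lt_of_le_of_ne h1 ?_
    rintro rfl; exact absurd h (lt_irrefl _)
  · rcases eq_or_lt_of_le h1 with h2 | h2
    · subst h2; exact absurd h (lt_irrefl _)
    · exact absurd (hK.rk_strictMono _ _ h2) (by omega)

lemma ic_le_of_rk_le (hK : IncComplex α n rk) {a b : α}
    (hcomp : a ≤ b ∨ b ≤ a) (h : rk a ≤ rk b) : a ≤ b := by
  rcases eq_or_lt_of_le h with h1 | h1
  · rcases hcomp with h2 | h2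
    · exact h2
    · rcases eq_or_lt_of_le h2 with h3 | h3
      · exact h3.ge
      · exact absurd (hK.rk_strictMono _ _ h3) (by omega)
  · exact (ic_lt_of_rk_lt hK hcomp h1).le

lemma ic_eq_of_rk_eq (hK : IncComplex α n rk) {a b : α}
    (hcomp : a ≤ b ∨ b ≤ a) (h : rk a = rk b) : a = b :=
  le_antisymm (ic_le_of_rk_le hK hcomp h.le)
    (ic_le_of_rk_le hK hcomp.symm h.ge)

lemma flag_insert_mem {Φ : Set α} (hΦ : IsFlagOf Set.univ Φ) {z : α}
    (h : ∀ w ∈ Φ, z ≤ w ∨ w ≤ z) : z ∈ Φ := by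
  have heq := hΦ.2.2 (insert z Φ) (Set.subset_univ _)
    (hΦ.2.1.insert fun b hb _ => h b hb) (Set.subset_insert _ _)
  rw [← heq]; exact Set.mem_insert _ _

lemma flag_bot_mem {Φ : Set α} (hΦ : IsFlagOf Set.univ Φ) : (⊥ : α) ∈ Φ :=
  flag_insert_mem hΦ fun w _ => Or.inl bot_le

lemma flag_top_mem {Φ : Set α} (hΦ : IsFlagOf Set.univ Φ) : (⊤ : α) ∈ Φ :=
  flag_insert_mem hΦ fun w _ => Or.inr le_top

lemma flag_rk_unique (hK : IncComplex α n rk) {Φ : Set α}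
    (hΦ : IsFlagOf Set.univ Φ) {x y : α} (hx : x ∈ Φ) (hy : y ∈ Φ)
    (h : rk x = rk y) : x = y :=
  ic_eq_of_rk_eq hK (chain_le_total hΦ.2.1 hx hy) h

lemma flag_image (g : α ≃o α) {Φ : Set α} (hΦ : IsFlagOf Set.univ Φ) :
    IsFlagOf Set.univ (⇑g '' Φ) := by
  refine ⟨Set.subset_univ _, IsChain.image_of_map_rel _ _ _ (fun a b h => g.monotone h) hΦ.2.1, ?_⟩
  intro Ψ _ hΨc hsub
  have h1 : Φ ⊆ ⇑g.symm '' Ψ := fun x hx =>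
    ⟨g x, hsub ⟨x, hx, rfl⟩, g.symm_apply_apply x⟩
  have h2 := hΦ.2.2 (⇑g.symm '' Ψ) (Set.subset_univ _)
    (IsChain.image_of_map_rel _ _ _ (fun a b h => g.symm.monotone h) hΨc) h1
  have h3 : ⇑g ∘ ⇑g.symm = id := funext g.apply_symm_apply
  calc Ψ = ⇑g '' (⇑g.symm '' Ψ) := by rw [← Set.image_comp, h3, Set.image_id]
    _ = ⇑g '' Φ := by rw [h2]

lemma int_strictMono_ge (lo hi : ℤ) (f : ℤ → ℤ)
    (hmono : ∀ r r', lo ≤ r → r < r' → r' ≤ hi → f r < f r')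
    (hlo : ∀ r, lo ≤ r → r ≤ hi → lo ≤ f r) :
    ∀ r, lo ≤ r → r ≤ hi → r ≤ f r := by
  intro r hr
  refine Int.le_induction (motive := fun r _ => r ≤ hi → r ≤ f r)
    (fun h => hlo lo le_rfl h) (fun m hm ih h => ?_) r hr
  have h1 := hmono m (m + 1) hm (by omega) h
  have h2 := ih (by omega)
  omega

lemma int_strictMono_le (lo hi : ℤ) (f : ℤ → ℤ)
    (hmono : ∀ r r', lo ≤ r → r < r' → r' ≤ hi → f r < f r')
    (hhi : ∀ r, lo ≤ r → r ≤ hi → f r ≤ hi) :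
    ∀ r, lo ≤ r → r ≤ hi → f r ≤ r := by
  intro r hr1 hr2
  refine Int.le_induction_down (motive := fun r _ => lo ≤ r → f r ≤ r)
    (fun h => hhi hi h le_rfl) (fun m hm ih h => ?_) r hr2 hr1
  have h1 := hmono (m - 1) m h (by omega) hm
  have h2 := ih (by omega)
  omega

lemma ic_rk_apply (hK : IncComplex α n rk) (g : α ≃o α) (a : α) :
    rk (g a) = rk a := by
  classical
  obtain ⟨Φ, hsub, hΦ, -⟩ := hK.chain_flag {a}
    (by intro x hx y hy hne
        rw [Set.mem_singleton_iff] at hx hy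
        subst hx; subst hy; exact absurd rfl hne)
  have haΦ : a ∈ Φ := hsub rfl
  have hch : ∀ i : ℤ, -1 ≤ i → i ≤ n → ∃ x, x ∈ Φ ∧ rk x = i := by
    intro i h1 h2
    obtain ⟨x, hx1, hx2⟩ := hK.flag_rk Φ hΦ i ⟨h1, h2⟩
    exact ⟨x, hx1, hx2⟩
  set E : ℤ → α := fun i => if h : -1 ≤ i ∧ i ≤ n then (hch i h.1 h.2).choose else ⊥
    with hE
  have hEmem : ∀ i, -1 ≤ i → i ≤ n → E i ∈ Φ ∧ rk (E i) = i := by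
    intro i h1 h2
    rw [hE]; simp only
    rw [dif_pos (⟨h1, h2⟩ : -1 ≤ i ∧ i ≤ n)]
    exact (hch i h1 h2).choose_spec
  have hmono : ∀ r r', -1 ≤ r → r < r' → r' ≤ n →
      rk (g (E r)) < rk (g (E r')) := by
    intro r r' h1 h2 h3
    have hr := hEmem r h1 (by omega)
    have hr' := hEmem r' (by omega) h3
    have hlt : E r < E r' :=
      ic_lt_of_rk_lt hK (chain_le_total hΦ.2.1 hr.1 hr'.1)
        (by rw [hr.2, hr'.2]; exact h2)
    exact hK.rk_strictMono _ _ (g.strictMono hlt)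
  have key1 := int_strictMono_ge (-1) n (fun i => rk (g (E i))) hmono
    (fun r h1 h2 => (ic_rk_mem hK _).1)
  have key2 := int_strictMono_le (-1) n (fun i => rk (g (E i))) hmono
    (fun r h1 h2 => (ic_rk_mem hK _).2)
  have hra := ic_rk_mem hK a
  have hEa : E (rk a) = a :=
    ic_eq_of_rk_eq hK
      (chain_le_total hΦ.2.1 (hEmem _ hra.1 hra.2).1 haΦ)
      (by rw [(hEmem _ hra.1 hra.2).2])
  have h1 := key1 (rk a) hra.1 hra.2
  have h2 := key2 (rk a) hra.1 hra.2
  simp only [hEa] at h1 h2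
  omega

lemma splice_flag {Φ Ψ : Set α} (hΦ : IsFlagOf Set.univ Φ)
    (hΨ : IsFlagOf Set.univ Ψ) {c : α} (hcΦ : c ∈ Φ) (hcΨ : c ∈ Ψ) :
    IsFlagOf Set.univ ((Φ ∩ Set.Iic c) ∪ (Ψ ∩ Set.Ici c)) := by
  set Θ := (Φ ∩ Set.Iic c) ∪ (Ψ ∩ Set.Ici c) with hΘdef
  have hchain : IsChain (· ≤ ·) Θ := by
    intro x hx y hy hne
    rcases hx with ⟨hx1, hx2⟩ | ⟨hx1, hx2⟩ <;> rcases hy with ⟨hy1, hy2⟩ | ⟨hy1, hy2⟩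
    · exact hΦ.2.1 hx1 hy1 hne
    · exact Or.inl (le_trans hx2 hy2)
    · exact Or.inr (le_trans hy2 hx2)
    · exact hΨ.2.1 hx1 hy1 hne
  refine ⟨Set.subset_univ _, hchain, ?_⟩
  intro Θ' _ hΘ'c hsub
  have hcΘ : c ∈ Θ := Or.inl ⟨hcΦ, le_rfl⟩
  refine Set.Subset.antisymm ?_ hsub
  intro z hz
  rcases chain_le_total hΘ'c hz (hsub hcΘ) with h | h
  · refine Or.inl ⟨flag_insert_mem hΦ fun w hw => ?_, h⟩
    rcases chain_le_total hΦ.2.1 hw hcΦ with h2 | h2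
    · exact chain_le_total hΘ'c hz (hsub (Or.inl ⟨hw, h2⟩))
    · exact Or.inl (h.trans h2)
  · refine Or.inr ⟨flag_insert_mem hΨ fun w hw => ?_, h⟩
    rcases chain_le_total hΨ.2.1 hw hcΨ with h2 | h2
    · exact Or.inr (h2.trans h)
    · exact chain_le_total hΘ'c hz (hsub (Or.inr ⟨hw, h2⟩))

lemma flag_out_of_Ioo {Φ : Set α} (hΦ : IsFlagOf Set.univ Φ) {A B z : α}
    (hA : A ∈ Φ) (hB : B ∈ Φ) (hz : z ∈ Φ) (h : z ∉ Set.Ioo A B) :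
    z ≤ A ∨ B ≤ z := by
  rcases chain_le_total hΦ.2.1 hz hA with h1 | h1
  · exact Or.inl h1
  · rcases eq_or_lt_of_le h1 with h2 | h2
    · exact Or.inl h2.ge
    · rcases chain_le_total hΦ.2.1 hz hB with h3 | h3
      · rcases eq_or_lt_of_le h3 with h4 | h4
        · exact Or.inr h4.ge
        · exact absurd ⟨h2, h4⟩ h
      · exact Or.inr h3

end Helpers

def AdjStep {α : Type*} [PartialOrder α] (Φ : Set α) (A B : α) :
    Set α → Set α → Prop := fun X Y =>
  IsFlagOf Set.univ X ∧ IsFlagOf Set.univ Y ∧ FlagAdj X Y ∧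
    (∀ z ∉ Set.Ioo A B, (z ∈ X ↔ z ∈ Φ)) ∧ (∀ z ∉ Set.Ioo A B, (z ∈ Y ↔ z ∈ Φ))

lemma connD {α : Type*} [PartialOrder α] [BoundedOrder α] {n : ℤ} {rk : α → ℤ}
    (hK : IncComplex α n rk) :
    ∀ d : ℕ, ∀ A B : α, A ≤ B → rk B - rk A ≤ (d : ℤ) →
    ∀ Φ Ψ : Set α, IsFlagOf Set.univ Φ → IsFlagOf Set.univ Ψ →
    A ∈ Φ → B ∈ Φ → A ∈ Ψ → B ∈ Ψ →
    (∀ z ∉ Set.Ioo A B, (z ∈ Φ ↔ z ∈ Ψ)) →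
    Relation.ReflTransGen (AdjStep Φ A B) Φ Ψ := by
  intro d
  induction d with
  | zero =>
    intro A B hAB hd Φ Ψ hΦ hΨ hAΦ hBΦ hAΨ hBΨ hagree
    have hempty : ∀ z, z ∉ Set.Ioo A B := by
      intro z hz
      have h1 := hK.rk_strictMono _ _ hz.1
      have h2 := hK.rk_strictMono _ _ hz.2
      omega
    have heq : Φ = Ψ := Set.ext fun z => hagree z (hempty z)
    subst heq
    exact Relation.ReflTransGen.refl
  | succ d IH =>
    intro A B hAB hd Φ Ψ hΦ hΨ hAΦ hBΦ hAΨ hBΨ hagree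
    by_cases hEq : Φ = Ψ
    · subst hEq; exact Relation.ReflTransGen.refl
    have hne1 : ¬ Φ ⊆ Ψ := fun h =>
      hEq ((hΦ.2.2 Ψ (Set.subset_univ _) hΨ.2.1 h).symm)
    have hne2 : ¬ Ψ ⊆ Φ := fun h =>
      hEq (hΨ.2.2 Φ (Set.subset_univ _) hΦ.2.1 h)
    obtain ⟨a, haΦ, haΨ⟩ := Set.not_subset.mp hne1
    obtain ⟨b, hbΨ, hbΦ⟩ := Set.not_subset.mp hne2
    have haI : a ∈ Set.Ioo A B := by
      by_contra h; exact haΨ ((hagree a h).mp haΦ)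
    have hbI : b ∈ Set.Ioo A B := by
      by_contra h; exact hbΦ ((hagree b h).mpr hbΨ)
    have hrka1 := hK.rk_strictMono _ _ haI.1
    have hrka2 := hK.rk_strictMono _ _ haI.2
    by_cases hgap : rk B - rk A ≤ 2
    · -- single adjacency step
      have huniq : ∀ X : Set α, IsFlagOf Set.univ X →
          ∀ x ∈ X, x ∈ Set.Ioo A B → ∀ y ∈ X, y ∈ Set.Ioo A B → x = y := by
        intro X hX x hx hxI y hy hyI
        have h1 := hK.rk_strictMono _ _ hxI.1
        have h2 := hK.rk_strictMono _ _ hxI.2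
        have h3 := hK.rk_strictMono _ _ hyI.1
        have h4 := hK.rk_strictMono _ _ hyI.2
        exact flag_rk_unique hK hX hx hy (by omega)
      have hXd : Φ \ Ψ = {a} := by
        ext x
        simp only [Set.mem_diff, Set.mem_singleton_iff]
        constructor
        · rintro ⟨hx1, hx2⟩
          have hxI : x ∈ Set.Ioo A B := by
            by_contra h; exact hx2 ((hagree x h).mp hx1)
          exact huniq Φ hΦ x hx1 hxI a haΦ haI
        · rintro rfl; exact ⟨haΦ, haΨ⟩
      have hYd : Ψ \ Φ = {b} := by
        ext x
        simp only [Set.mem_diff, Set.mem_singleton_iff]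
        constructor
        · rintro ⟨hx1, hx2⟩
          have hxI : x ∈ Set.Ioo A B := by
            by_contra h; exact hx2 ((hagree x h).mpr hx1)
          exact huniq Ψ hΨ x hx1 hxI b hbΨ hbI
        · rintro rfl; exact ⟨hbΨ, hbΦ⟩
      exact Relation.ReflTransGen.single
        ⟨hΦ, hΨ, ⟨by rw [hXd]; exact Set.ncard_singleton a,
          by rw [hYd]; exact Set.ncard_singleton b⟩,
          fun z _ => Iff.rfl, fun z hz => (hagree z hz).symm⟩
    push_neg at hgap
    -- claim 1 : flags agreeing outside Ioo A B with a common element in Ioo A B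
    have claim1 : ∀ Φ' Ψ' : Set α, IsFlagOf Set.univ Φ' → IsFlagOf Set.univ Ψ' →
        A ∈ Φ' → B ∈ Φ' → A ∈ Ψ' → B ∈ Ψ' →
        (∀ z ∉ Set.Ioo A B, (z ∈ Φ' ↔ z ∈ Ψ')) →
        ∀ c, c ∈ Set.Ioo A B → c ∈ Φ' → c ∈ Ψ' →
        Relation.ReflTransGen (AdjStep Φ' A B) Φ' Ψ' := by
      intro Φ' Ψ' hΦ' hΨ' hA1 hB1 hA2 hB2 hag c hcI hc1 hc2
      set Θ := (Φ' ∩ Set.Iic c) ∪ (Ψ' ∩ Set.Ici c) with hΘdef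
      have hΘ : IsFlagOf Set.univ Θ := splice_flag hΦ' hΨ' hc1 hc2
      have hcΘ : c ∈ Θ := Or.inl ⟨hc1, le_rfl⟩
      have hAΘ : A ∈ Θ := Or.inl ⟨hA1, hcI.1.le⟩
      have hBΘ : B ∈ Θ := Or.inr ⟨hB2, hcI.2.le⟩
      have hagΦΘ : ∀ z ∉ Set.Ioo A B, (z ∈ Φ' ↔ z ∈ Θ) := by
        intro z hz
        constructor
        · intro hzΦ
          rcases chain_le_total hΦ'.2.1 hzΦ hc1 with h | h
          · exact Or.inl ⟨hzΦ, h⟩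
          · exact Or.inr ⟨(hag z hz).mp hzΦ, h⟩
        · rintro (⟨h1, -⟩ | ⟨h1, -⟩)
          · exact h1
          · exact (hag z hz).mpr h1
      have hagcB : ∀ z ∉ Set.Ioo c B, (z ∈ Φ' ↔ z ∈ Θ) := by
        intro z hz
        constructor
        · intro hzΦ
          rcases chain_le_total hΦ'.2.1 hzΦ hc1 with h | h
          · exact Or.inl ⟨hzΦ, h⟩
          · rcases eq_or_lt_of_le h with h' | h'
            · exact Or.inl ⟨hzΦ, h'.ge⟩
            · have hzB : B ≤ z := by
                rcases chain_le_total hΦ'.2.1 hzΦ hB1 with h2 | h2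
                · rcases eq_or_lt_of_le h2 with h3 | h3
                  · exact h3.ge
                  · exact absurd ⟨h', h3⟩ hz
                · exact h2
              have hzout : z ∉ Set.Ioo A B := fun hc' => absurd hc'.2 hzB.not_gt
              exact Or.inr ⟨(hag z hzout).mp hzΦ, h⟩
        · rintro (⟨h1, -⟩ | ⟨h1, h2⟩)
          · exact h1
          · rcases eq_or_lt_of_le h2 with h3 | h3
            · rw [← h3]; exact hc1
            · have hzB : B ≤ z := by
                rcases chain_le_total hΨ'.2.1 h1 hB2 with h4 | h4
                · rcases eq_or_lt_of_le h4 with h5 | h5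
                  · exact h5.ge
                  · exact absurd ⟨h3, h5⟩ hz
                · exact h4
              have hzout : z ∉ Set.Ioo A B := fun hc' => absurd hc'.2 hzB.not_gt
              exact (hag z hzout).mpr h1
      have hagAc : ∀ z ∉ Set.Ioo A c, (z ∈ Θ ↔ z ∈ Ψ') := by
        intro z hz
        constructor
        · rintro (⟨h1, h2⟩ | ⟨h1, -⟩)
          · rcases eq_or_lt_of_le h2 with h3 | h3
            · rw [h3]; exact hc2
            · have hzA : z ≤ A := by
                rcases chain_le_total hΦ'.2.1 h1 hA1 with h4 | h4
                · exact h4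
                · rcases eq_or_lt_of_le h4 with h5 | h5
                  · exact h5.ge
                  · exact absurd ⟨h5, h3⟩ hz
              have hzout : z ∉ Set.Ioo A B := fun hc' => absurd hc'.1 hzA.not_gt
              exact (hag z hzout).mp h1
          · exact h1
        · intro h1
          rcases chain_le_total hΨ'.2.1 h1 hc2 with h | h
          · rcases eq_or_lt_of_le h with h3 | h3
            · exact Or.inr ⟨h1, h3.ge⟩
            · have hzA : z ≤ A := by
                rcases chain_le_total hΨ'.2.1 h1 hA2 with h4 | h4
                · exact h4
                · rcases eq_or_lt_of_le h4 with h5 | h5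
                  · exact h5.ge
                  · exact absurd ⟨h5, h3⟩ hz
              have hzout : z ∉ Set.Ioo A B := fun hc' => absurd hc'.1 hzA.not_gt
              exact Or.inl ⟨(hag z hzout).mpr h1, h3.le⟩
          · exact Or.inr ⟨h1, h⟩
      have hrc1 := hK.rk_strictMono _ _ hcI.1
      have hrc2 := hK.rk_strictMono _ _ hcI.2
      have leg1 := IH c B hcI.2.le (by omega) Φ' Θ hΦ' hΘ hc1 hB1 hcΘ hBΘ hagcB
      have leg2 := IH A c hcI.1.le (by omega) Θ Ψ' hΘ hΨ' hAΘ hcΘ hA2 hc2 hagAc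
      have hIooc : Set.Ioo c B ⊆ Set.Ioo A B := fun x hx => ⟨hcI.1.trans hx.1, hx.2⟩
      have hIooA : Set.Ioo A c ⊆ Set.Ioo A B := fun x hx => ⟨hx.1, hx.2.trans hcI.2⟩
      have leg1' : Relation.ReflTransGen (AdjStep Φ' A B) Φ' Θ := by
        refine Relation.ReflTransGen.mono ?_ _ _ leg1
        rintro X Y ⟨h1, h2, h3, h4, h5⟩
        exact ⟨h1, h2, h3, fun z hz => h4 z (fun h => hz (hIooc h)),
          fun z hz => h5 z (fun h => hz (hIooc h))⟩
      have leg2' : Relation.ReflTransGen (AdjStep Φ' A B) Θ Ψ' := by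
        refine Relation.ReflTransGen.mono ?_ _ _ leg2
        rintro X Y ⟨h1, h2, h3, h4, h5⟩
        refine ⟨h1, h2, h3, fun z hz => ?_, fun z hz => ?_⟩
        · exact (h4 z (fun h => hz (hIooA h))).trans (hagΦΘ z hz).symm
        · exact (h5 z (fun h => hz (hIooA h))).trans (hagΦΘ z hz).symm
      exact leg1'.trans leg2'
    -- claim 2 : move to a flag containing a comparable element
    have claim2 : ∀ X : Set α, IsFlagOf Set.univ X → A ∈ X → B ∈ X →
        ∀ c ∈ Set.Ioo A B, c ∈ X → ∀ c' ∈ Set.Ioo A B, (c ≤ c' ∨ c' ≤ c) →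
        ∃ Θ : Set α, IsFlagOf Set.univ Θ ∧ A ∈ Θ ∧ B ∈ Θ ∧ c' ∈ Θ ∧
          (∀ z ∉ Set.Ioo A B, (z ∈ Θ ↔ z ∈ X)) ∧
          Relation.ReflTransGen (AdjStep X A B) X Θ := by
      intro X hX hAX hBX c hcI hcX c' hc'I hcc
      have hXout : ∀ w ∈ X \ Set.Ioo A B, w ≤ A ∨ B ≤ w := fun w hw =>
        flag_out_of_Ioo hX hAX hBX hw.1 hw.2
      have hCchain : IsChain (· ≤ ·) (insert c (insert c' (X \ Set.Ioo A B))) := by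
        have hbase : IsChain (· ≤ ·) (X \ Set.Ioo A B) := hX.2.1.mono Set.diff_subset
        have h1 : IsChain (· ≤ ·) (insert c' (X \ Set.Ioo A B)) := by
          refine hbase.insert (fun w hw _ => ?_)
          rcases hXout w hw with h | h
          · exact Or.inr (h.trans hc'I.1.le)
          · exact Or.inl (hc'I.2.le.trans h)
        refine h1.insert (fun w hw _ => ?_)
        rcases hw with rfl | hw
        · exact hcc
        · rcases hXout w hw with h | h
          · exact Or.inr (h.trans hcI.1.le)
          · exact Or.inl (hcI.2.le.trans h)
      obtain ⟨Θ, hCΘ, hΘ, -⟩ := hK.chain_flag _ hCchain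
      have hXoutΘ : ∀ w ∈ X, w ∉ Set.Ioo A B → w ∈ Θ := fun w h1 h2 =>
        hCΘ (Set.mem_insert_of_mem _ (Set.mem_insert_of_mem _ ⟨h1, h2⟩))
      have hAΘ : A ∈ Θ := hXoutΘ A hAX (fun h => lt_irrefl _ h.1)
      have hBΘ : B ∈ Θ := hXoutΘ B hBX (fun h => lt_irrefl _ h.2)
      have hcΘ : c ∈ Θ := hCΘ (Set.mem_insert _ _)
      have hc'Θ : c' ∈ Θ := hCΘ (Set.mem_insert_of_mem _ (Set.mem_insert _ _))
      have hagree2 : ∀ z ∉ Set.Ioo A B, (z ∈ Θ ↔ z ∈ X) := by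
        intro z hz
        constructor
        · intro hzΘ
          refine flag_insert_mem hX fun w hw => ?_
          by_cases hwI : w ∈ Set.Ioo A B
          · rcases flag_out_of_Ioo hΘ hAΘ hBΘ hzΘ hz with h | h
            · exact Or.inl (h.trans hwI.1.le)
            · exact Or.inr (hwI.2.le.trans h)
          · exact chain_le_total hΘ.2.1 hzΘ (hXoutΘ w hw hwI)
        · intro h; exact hXoutΘ z h hz
      exact ⟨Θ, hΘ, hAΘ, hBΘ, hc'Θ, hagree2,
        claim1 X Θ hX hΘ hAX hBX hAΘ hBΘ
          (fun z hz => (hagree2 z hz).symm) c hcI hcX hcΘ⟩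
    -- the walk along a path of incident proper faces
    have hpath := hK.strong_conn A B hAB (by omega) a b haI.1 haI.2 hbI.1 hbI.2
    have main : ∀ c, Relation.ReflTransGen
        (fun x y => A < x ∧ x < B ∧ A < y ∧ y < B ∧ (x ≤ y ∨ y ≤ x)) c b →
        ∀ X : Set α, IsFlagOf Set.univ X → A ∈ X → B ∈ X →
        (∀ z ∉ Set.Ioo A B, (z ∈ X ↔ z ∈ Φ)) → c ∈ X →
        Relation.ReflTransGen (AdjStep Φ A B) X Ψ := by
      intro c hc
      induction hc using Relation.ReflTransGen.head_induction_on with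
      | refl =>
        intro X hX hAX hBX hagX hbX
        have hp := claim1 X Ψ hX hΨ hAX hBX hAΨ hBΨ
          (fun z hz => (hagX z hz).trans (hagree z hz)) b hbI hbX hbΨ
        refine Relation.ReflTransGen.mono ?_ _ _ hp
        rintro X' Y' ⟨h1, h2, h3, h4, h5⟩
        exact ⟨h1, h2, h3, fun z hz => (h4 z hz).trans (hagX z hz),
          fun z hz => (h5 z hz).trans (hagX z hz)⟩
      | head h' hrest IH2 =>
        intro X hX hAX hBX hagX hcX
        obtain ⟨hc1, hc2, hc3, hc4, hcc⟩ := h'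
        obtain ⟨Θ, hΘ, hAΘ, hBΘ, hc'Θ, hagΘX, hpathXΘ⟩ :=
          claim2 X hX hAX hBX _ ⟨hc1, hc2⟩ hcX _ ⟨hc3, hc4⟩ hcc
        have p1 : Relation.ReflTransGen (AdjStep Φ A B) X Θ := by
          refine Relation.ReflTransGen.mono ?_ _ _ hpathXΘ
          rintro X' Y' ⟨h1, h2, h3, h4, h5⟩
          exact ⟨h1, h2, h3, fun z hz => (h4 z hz).trans (hagX z hz),
            fun z hz => (h5 z hz).trans (hagX z hz)⟩
        exact p1.trans (IH2 Θ hΘ hAΘ hBΘ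
          (fun z hz => (hagΘX z hz).trans (hagX z hz)) hc'Θ)
    exact main a hpath Φ hΦ hAΦ hBΦ (fun z _ => Iff.rfl) haΦ

/-- A complex is regular if its automorphism group acts transitively on flags. -/
def IsRegularIC (α : Type*) [PartialOrder α] : Prop :=
  ∀ Φ Ψ : Set α, IsFlagOf Set.univ Φ → IsFlagOf Set.univ Ψ →
    ∃ g : α ≃o α, ⇑g '' Φ = Ψ

/-- `Γ` is a flag-transitive subgroup of the automorphism group. -/
def FlagTrans {α : Type*} [PartialOrder α] (Γ : Subgroup (α ≃o α)) : Prop :=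
  ∀ Φ Ψ : Set α, IsFlagOf Set.univ Φ → IsFlagOf Set.univ Ψ →
    ∃ g ∈ Γ, ⇑g '' Φ = Ψ

/-- The distinguished generating subset `R_i`: the stabilizer in `Γ` of
`Φ \ {F_i}`, where `F` enumerates the base flag by rank. -/
def Rset {α : Type*} [PartialOrder α] (Γ : Subgroup (α ≃o α)) (F : ℤ → α)
    (n i : ℤ) : Set (α ≃o α) :=
  {g | g ∈ Γ ∧ ∀ j ∈ Set.Icc (-1 : ℤ) n, j ≠ i → g (F j) = F j}

/-- an `i`-face `G_i` satisfies `G_i ≤ F_j` iff `G_i` is the image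
of the base `i`-face under some `γ` in `Γ_j = ⟨R_k : k ≠ j⟩`. -/
theorem face_below_base_face_iff
    {α : Type*} [PartialOrder α] [BoundedOrder α] (n : ℤ) (rk : α → ℤ)
    (hn : 1 ≤ n) (hK : IncComplex α n rk)
    (Γ : Subgroup (α ≃o α)) (hΓ : FlagTrans Γ)
    (F : ℤ → α) (hFflag : IsFlagOf Set.univ (F '' Set.Icc (-1 : ℤ) n))
    (hFrk : ∀ i ∈ Set.Icc (-1 : ℤ) n, rk (F i) = i)
    (i j : ℤ) (h0i : 0 ≤ i) (hij : i ≤ j) (hj : j ≤ n - 1)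
    (Gi : α) (hGi : rk Gi = i) :
    Gi ≤ F j ↔
      ∃ γ ∈ Subgroup.closure
          (⋃ k ∈ Set.Icc (-1 : ℤ) n \ {j}, Rset Γ F n k),
        γ (F i) = Gi := by
  classical
  set S : Set (α ≃o α) := ⋃ k ∈ Set.Icc (-1 : ℤ) n \ {j}, Rset Γ F n k with hSdef
  set Φ₀ : Set α := F '' Set.Icc (-1 : ℤ) n with hΦ₀def
  have hiIcc : i ∈ Set.Icc (-1 : ℤ) n := ⟨by omega, by omega⟩
  have hjIcc : j ∈ Set.Icc (-1 : ℤ) n := ⟨by omega, by omega⟩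
  have hFiΦ : F i ∈ Φ₀ := ⟨i, hiIcc, rfl⟩
  have hFjΦ : F j ∈ Φ₀ := ⟨j, hjIcc, rfl⟩
  have hrkFi : rk (F i) = i := hFrk i hiIcc
  have hrkFj : rk (F j) = j := hFrk j hjIcc
  constructor
  · -- forward direction
    intro hle
    have hchain : IsChain (· ≤ ·) {Gi, F j} := by
      intro x hx y hy hne
      rcases hx with rfl | hx <;> rcases hy with rfl | hy
      · exact absurd rfl hne
      · rw [Set.mem_singleton_iff] at hy; subst hy; exact Or.inl hle
      · rw [Set.mem_singleton_iff] at hx; subst hx; exact Or.inr hle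
      · rw [Set.mem_singleton_iff] at hx hy; subst hx; subst hy
        exact absurd rfl hne
    obtain ⟨Ψ, hsubΨ, hΨ, -⟩ := hK.chain_flag _ hchain
    have hGiΨ : Gi ∈ Ψ := hsubΨ (Set.mem_insert _ _)
    have hFjΨ : F j ∈ Ψ := hsubΨ (Set.mem_insert_of_mem _ rfl)
    have hbΦ₀ : (⊥ : α) ∈ Φ₀ := flag_bot_mem hFflag
    have htΦ₀ : (⊤ : α) ∈ Φ₀ := flag_top_mem hFflag
    have hbΨ : (⊥ : α) ∈ Ψ := flag_bot_mem hΨ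
    have htΨ : (⊤ : α) ∈ Ψ := flag_top_mem hΨ
    have hFjb : (⊥ : α) < F j :=
      ic_lt_of_rk_lt hK (Or.inl bot_le) (by rw [hK.rk_bot, hrkFj]; omega)
    have hFjt : F j < (⊤ : α) :=
      ic_lt_of_rk_lt hK (Or.inl le_top) (by rw [hK.rk_top, hrkFj]; omega)
    -- splice flag
    set Θ : Set α := (Φ₀ ∩ Set.Iic (F j)) ∪ (Ψ ∩ Set.Ici (F j)) with hΘdef
    have hΘ : IsFlagOf Set.univ Θ := splice_flag hFflag hΨ hFjΦ hFjΨ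
    have hFjΘ : F j ∈ Θ := Or.inl ⟨hFjΦ, le_rfl⟩
    have hbΘ : (⊥ : α) ∈ Θ := Or.inl ⟨hbΦ₀, bot_le⟩
    have htΘ : (⊤ : α) ∈ Θ := Or.inr ⟨htΨ, le_top⟩
    have hag1 : ∀ z ∉ Set.Ioo (F j) (⊤ : α), (z ∈ Φ₀ ↔ z ∈ Θ) := by
      intro z hz
      constructor
      · intro hzΦ₀
        rcases chain_le_total hFflag.2.1 hzΦ₀ hFjΦ with h | h
        · exact Or.inl ⟨hzΦ₀, h⟩
        · rcases eq_or_lt_of_le h with h2 | h2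
          · exact Or.inl ⟨hzΦ₀, h2.ge⟩
          · have hzt : z = ⊤ := by
              by_contra h3
              exact hz ⟨h2, lt_top_iff_ne_top.mpr h3⟩
            rw [hzt]; exact htΘ
      · rintro (⟨h1, -⟩ | ⟨h1, h2⟩)
        · exact h1
        · rcases eq_or_lt_of_le h2 with h3 | h3
          · rw [← h3]; exact hFjΦ
          · have hzt : z = ⊤ := by
              by_contra h4
              exact hz ⟨h3, lt_top_iff_ne_top.mpr h4⟩
            rw [hzt]; exact htΦ₀
    have hag2 : ∀ z ∉ Set.Ioo (⊥ : α) (F j), (z ∈ Θ ↔ z ∈ Ψ) := by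
      intro z hz
      constructor
      · rintro (⟨h1, h2⟩ | ⟨h1, -⟩)
        · rcases eq_or_lt_of_le h2 with h3 | h3
          · rw [h3]; exact hFjΨ
          · have hzb : z = ⊥ := by
              by_contra h4
              exact hz ⟨bot_lt_iff_ne_bot.mpr h4, h3⟩
            rw [hzb]; exact hbΨ
        · exact h1
      · intro h1
        rcases chain_le_total hΨ.2.1 h1 hFjΨ with h | h
        · rcases eq_or_lt_of_le h with h3 | h3
          · exact Or.inr ⟨h1, h3.ge⟩
          · have hzb : z = ⊥ := by
              by_contra h4
              exact hz ⟨bot_lt_iff_ne_bot.mpr h4, h3⟩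
            rw [hzb]; exact Or.inl ⟨hbΦ₀, bot_le⟩
        · exact Or.inr ⟨h1, h⟩
    have leg1 := connD hK (rk (⊤ : α) - rk (F j)).toNat (F j) ⊤ le_top
      (by omega) Φ₀ Θ hFflag hΘ hFjΦ htΦ₀ hFjΘ htΘ hag1
    have leg2 := connD hK (rk (F j) - rk (⊥ : α)).toNat ⊥ (F j) bot_le
      (by omega) Θ Ψ hΘ hΨ hbΘ hFjΘ hbΨ hFjΨ hag2
    have hFjnot1 : F j ∉ Set.Ioo (F j) (⊤ : α) := fun h => lt_irrefl _ h.1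
    have hFjnot2 : F j ∉ Set.Ioo (⊥ : α) (F j) := fun h => lt_irrefl _ h.2
    set relJ : Set α → Set α → Prop := fun X Y =>
      IsFlagOf Set.univ X ∧ IsFlagOf Set.univ Y ∧ FlagAdj X Y ∧
        F j ∈ X ∧ F j ∈ Y with hrelJ
    have leg1' : Relation.ReflTransGen relJ Φ₀ Θ := by
      refine Relation.ReflTransGen.mono ?_ _ _ leg1
      rintro X Y ⟨h1, h2, h3, h4, h5⟩
      exact ⟨h1, h2, h3, (h4 _ hFjnot1).mpr hFjΦ, (h5 _ hFjnot1).mpr hFjΦ⟩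
    have leg2' : Relation.ReflTransGen relJ Θ Ψ := by
      refine Relation.ReflTransGen.mono ?_ _ _ leg2
      rintro X Y ⟨h1, h2, h3, h4, h5⟩
      exact ⟨h1, h2, h3, (h4 _ hFjnot2).mpr hFjΘ, (h5 _ hFjnot2).mpr hFjΘ⟩
    have hpath := leg1'.trans leg2'
    -- transport group elements along the path
    have hstep : ∀ X Y : Set α, relJ X Y →
        (∃ γ ∈ Subgroup.closure S, ⇑γ '' Φ₀ = X) →
        (∃ γ ∈ Subgroup.closure S, ⇑γ '' Φ₀ = Y) := by
      rintro X Y ⟨hX, hY, ⟨hadj1, hadj2⟩, hFjX, hFjY⟩ ⟨γ, hγcl, hγΦ⟩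
      obtain ⟨aa, ha⟩ := Set.ncard_eq_one.mp hadj1
      obtain ⟨bb, hb⟩ := Set.ncard_eq_one.mp hadj2
      have haXY : aa ∈ X \ Y := by rw [ha]; rfl
      have hrkaa := ic_rk_mem hK aa
      have hkj : rk aa ≠ j := by
        intro h
        have : aa = F j := flag_rk_unique hK hX haXY.1 hFjX (by rw [hrkFj, h])
        exact haXY.2 (this ▸ hFjY)
      set Φ' : Set α := ⇑γ⁻¹ '' Y with hΦ'def
      have hΦ' : IsFlagOf Set.univ Φ' := flag_image γ⁻¹ hY
      obtain ⟨g, hgΓ, hgΦ⟩ := hΓ Φ₀ Φ' hFflag hΦ'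
      have hgR : g ∈ Rset Γ F n (rk aa) := by
        refine ⟨hgΓ, fun m hm hmk => ?_⟩
        have hFmΦ₀ : F m ∈ Φ₀ := ⟨m, hm, rfl⟩
        have hγFmX : γ (F m) ∈ X := hγΦ ▸ ⟨F m, hFmΦ₀, rfl⟩
        have hγFmY : γ (F m) ∈ Y := by
          by_contra h
          have hmem : γ (F m) ∈ X \ Y := ⟨hγFmX, h⟩
          rw [ha] at hmem
          have hr : rk (γ (F m)) = m := by rw [ic_rk_apply hK, hFrk m hm]
          exact hmk (by rw [← hr, hmem])
        have hFmΦ' : F m ∈ Φ' := ⟨γ (F m), hγFmY, RelIso.inv_apply_self γ _⟩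
        have hgFm : g (F m) ∈ Φ' := hgΦ ▸ ⟨F m, hFmΦ₀, rfl⟩
        exact flag_rk_unique hK hΦ' hgFm hFmΦ' (by rw [ic_rk_apply hK, hFrk m hm])
      have hgS : g ∈ S := by
        rw [hSdef]
        refine Set.mem_biUnion ?_ hgR
        exact ⟨⟨hrkaa.1, hrkaa.2⟩, by simpa using hkj⟩
      refine ⟨γ * g, Subgroup.mul_mem _ hγcl (Subgroup.subset_closure hgS), ?_⟩
      have hco : ⇑(γ * g) = ⇑γ ∘ ⇑g := rfl
      have hco2 : ⇑γ ∘ ⇑γ⁻¹ = id := funext fun x => RelIso.apply_inv_self γ x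
      rw [hco, Set.image_comp, hgΦ, hΦ'def, ← Set.image_comp, hco2, Set.image_id]
    have transport : ∀ Y : Set α, Relation.ReflTransGen relJ Φ₀ Y →
        ∃ γ ∈ Subgroup.closure S, ⇑γ '' Φ₀ = Y := by
      intro Y hY
      induction hY with
      | refl =>
        refine ⟨1, Subgroup.one_mem _, ?_⟩
        have h1 : ⇑(1 : α ≃o α) = id := rfl
        rw [h1, Set.image_id]
      | tail hrel hlast IH => exact hstep _ _ hlast IH
    obtain ⟨γ, hγcl, hγΦ⟩ := transport Ψ hpath
    refine ⟨γ, hγcl, ?_⟩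
    have hγFi : γ (F i) ∈ Ψ := hγΦ ▸ ⟨F i, hFiΦ, rfl⟩
    exact flag_rk_unique hK hΨ hγFi hGiΨ
      (by rw [ic_rk_apply hK, hrkFi, hGi])
  · -- reverse direction
    rintro ⟨γ, hγ, hγFi⟩
    have hfix : γ (F j) = F j := by
      clear hγFi
      induction hγ using Subgroup.closure_induction with
      | mem g hg =>
        rw [hSdef] at hg
        simp only [Set.mem_iUnion] at hg
        obtain ⟨k, hk, hgk⟩ := hg
        refine hgk.2 j hjIcc ?_
        intro h
        exact (by simpa using hk.2 : k ≠ j) (h ▸ rfl)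
      | one => rfl
      | mul x y hx hy ihx ihy =>
        rw [RelIso.mul_apply, ihy, ihx]
      | inv x hx ihx =>
        calc x⁻¹ (F j) = x⁻¹ (x (F j)) := by rw [ihx]
          _ = F j := RelIso.inv_apply_self x _
    have hFiFj : F i ≤ F j :=
      ic_le_of_rk_le hK (chain_le_total hFflag.2.1 hFiΦ hFjΦ)
        (by rw [hrkFi, hrkFj]; exact hij)
    calc Gi = γ (F i) := hγFi.symm
      _ ≤ γ (F j) := γ.monotone hFiFj
      _ = F j := hfix
end

section
/- Let K be a regular incidence complex of rank n with flag-transitive subgroup Γ, base flag Φ = {F_{-1},...,F_n}, and distinguished generating subgroups R_{-1},...,R_n. For 0 ≤ i ≤ j ≤ n-1 and φ, ψ ∈ Γ, the following are equivalent: (a) F_i φ ≤ F_j ψ; (b) φψ^{-1} ∈ Γ_{i+1}^+ Γ_{j-1}^-; (c) Γ_i φ ∩ Γ_j ψ ≠ ∅; where Γ_k := ⟨R_l : l ≠ k⟩, Γ_k^- := ⟨R_l : l ≤ k⟩, and Γ_k^+ := ⟨R_l : l ≥ k⟩. -/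
open Set Pointwise

/-- The right action of an automorphism `φ` on a face `x` (so that
`(x · φ) · ψ = x · (φψ)`), written `x φ` in the paper. -/
def rAct {α : Type*} [PartialOrder α] (x : α) (φ : α ≃o α) : α := φ⁻¹ x

set_option linter.unusedSectionVars false
set_option linter.unusedVariables false

namespace ICAux

variable {α : Type*} [PartialOrder α] [BoundedOrder α] {n : ℤ} {rk : α → ℤ}

lemma rk_mem (hK : IncComplex α n rk) (x : α) : rk x ∈ Set.Icc (-1 : ℤ) n := by
  constructor
  · rcases eq_or_lt_of_le (bot_le : (⊥ : α) ≤ x) with h | h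
    · rw [← h, hK.rk_bot]
    · have := hK.rk_strictMono _ _ h; rw [hK.rk_bot] at this; omega
  · rcases eq_or_lt_of_le (le_top : x ≤ (⊤ : α)) with h | h
    · rw [h, hK.rk_top]
    · have := hK.rk_strictMono _ _ h; rw [hK.rk_top] at this; omega

lemma eq_of_le_rk (hK : IncComplex α n rk) {x y : α} (h : x ≤ y) (hr : rk y ≤ rk x) : x = y := by
  rcases eq_or_lt_of_le h with h' | h'
  · exact h'
  · have := hK.rk_strictMono _ _ h'; omega

lemma chain_le (hK : IncComplex α n rk) {c : Set α} (hc : IsChain (· ≤ ·) c) {x y : α}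
    (hx : x ∈ c) (hy : y ∈ c) (h : rk x ≤ rk y) : x ≤ y := by
  rcases eq_or_ne x y with rfl | hne
  · exact le_rfl
  · rcases hc hx hy hne with h' | h'
    · exact h'
    · exact (eq_of_le_rk hK h' h).symm.le

lemma chain_lt (hK : IncComplex α n rk) {c : Set α} (hc : IsChain (· ≤ ·) c) {x y : α}
    (hx : x ∈ c) (hy : y ∈ c) (h : rk x < rk y) : x < y := by
  have hle := chain_le hK hc hx hy h.le
  rcases eq_or_lt_of_le hle with rfl | h'
  · omega
  · exact h'

lemma chain_rk_eq (hK : IncComplex α n rk) {c : Set α} (hc : IsChain (· ≤ ·) c) {x y : α}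
    (hx : x ∈ c) (hy : y ∈ c) (h : rk x = rk y) : x = y :=
  le_antisymm (chain_le hK hc hx hy h.le) (chain_le hK hc hy hx h.ge)

lemma face_unique (hK : IncComplex α n rk) {Ψ : Set α} (hΨ : IsFlagOf Set.univ Ψ) {x y : α}
    (hx : x ∈ Ψ) (hy : y ∈ Ψ) (h : rk x = rk y) : x = y :=
  chain_rk_eq hK hΨ.2.1 hx hy h

lemma isFlagOf_of (hK : IncComplex α n rk) {Ψ : Set α} (hch : IsChain (· ≤ ·) Ψ)
    (hrks : ∀ k ∈ Set.Icc (-1 : ℤ) n, ∃ a ∈ Ψ, rk a = k) : IsFlagOf Set.univ Ψ := by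
  refine ⟨subset_univ _, hch, ?_⟩
  intro Ξ _ hΞch hsub
  refine subset_antisymm ?_ hsub
  intro x hx
  obtain ⟨y, hyΨ, hyrk⟩ := hrks (rk x) (rk_mem hK x)
  have : x = y := chain_rk_eq hK hΞch hx (hsub hyΨ) hyrk.symm
  exact this ▸ hyΨ

lemma exists_flag (hK : IncComplex α n rk) {c : Set α} (hc : IsChain (· ≤ ·) c) :
    ∃ Ψ : Set α, c ⊆ Ψ ∧ IsFlagOf Set.univ Ψ := by
  obtain ⟨Ψ, h1, h2, _⟩ := hK.chain_flag c hc
  exact ⟨Ψ, h1, h2⟩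

lemma img_inv (g : α ≃o α) (s : Set α) : ⇑g '' (⇑g⁻¹ '' s) = s := by
  ext x
  simp only [Set.mem_image]
  constructor
  · rintro ⟨y, ⟨z, hz, rfl⟩, rfl⟩
    have : g ((g⁻¹ : α ≃o α) z) = z := g.apply_symm_apply z
    rwa [this]
  · intro hx
    exact ⟨(g⁻¹ : α ≃o α) x, ⟨x, hx, rfl⟩, g.apply_symm_apply x⟩

lemma image_flag (g : α ≃o α) {Ψ : Set α} (h : IsFlagOf Set.univ Ψ) :
    IsFlagOf Set.univ (⇑g '' Ψ) := by
  refine ⟨subset_univ _, h.2.1.image_of_map_rel _ _ _ (fun x y hxy => g.monotone hxy), ?_⟩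
  intro Ξ _ hΞch hsub
  have hpre : ⇑g⁻¹ '' Ξ = Ψ := by
    apply h.2.2 _ (subset_univ _) (hΞch.image_of_map_rel _ _ _ (fun x y hxy => (g⁻¹ : α ≃o α).monotone hxy))
    intro x hx
    refine ⟨g x, hsub ⟨x, hx, rfl⟩, g.symm_apply_apply x⟩
  rw [← hpre, img_inv]

lemma cover_rk (hK : IncComplex α n rk) {x y : α} (hxy : x < y) (hr : rk y = rk x + 1)
    (g : α ≃o α) (hx : rk (g x) = rk x) : rk (g y) = rk y := by
  have hgxy : g x < g y := g.strictMono hxy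
  have h1 : rk (g x) < rk (g y) := hK.rk_strictMono _ _ hgxy
  by_contra hne
  have h2 : rk (g x) + 1 < rk (g y) := by
    rcases lt_or_eq_of_le (by omega : rk (g x) + 1 ≤ rk (g y)) with h | h
    · exact h
    · exact absurd (by omega) hne
  have hch : IsChain (· ≤ ·) ({g x, g y} : Set α) := by
    intro u hu v hv _
    rcases hu with rfl | hu <;> rcases hv with rfl | hv
    · exact Or.inl le_rfl
    · simp only [Set.mem_singleton_iff] at hv; exact Or.inl (hv ▸ hgxy.le)
    · simp only [Set.mem_singleton_iff] at hu; exact Or.inr (hu ▸ hgxy.le)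
    · simp only [Set.mem_singleton_iff] at hu hv; exact Or.inl (hu ▸ hv ▸ le_rfl)
  obtain ⟨Ψ, hsub, hΨ⟩ := exists_flag hK hch
  obtain ⟨z, hzΨ, hzrk⟩ := hK.flag_rk Ψ hΨ (rk (g x) + 1)
    ⟨by have := (rk_mem hK (g x)).1; omega, by have := (rk_mem hK (g y)).2; omega⟩
  have hz1 : g x < z := chain_lt hK hΨ.2.1 (hsub (by simp)) hzΨ (by omega)
  have hz2 : z < g y := chain_lt hK hΨ.2.1 hzΨ (hsub (by simp)) (by omega)
  have hp1 : x < (g⁻¹ : α ≃o α) z := by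
    have := (g⁻¹ : α ≃o α).strictMono hz1
    rwa [show (g⁻¹ : α ≃o α) (g x) = x from g.symm_apply_apply x] at this
  have hp2 : (g⁻¹ : α ≃o α) z < y := by
    have := (g⁻¹ : α ≃o α).strictMono hz2
    rwa [show (g⁻¹ : α ≃o α) (g y) = y from g.symm_apply_apply y] at this
  have q1 := hK.rk_strictMono _ _ hp1
  have q2 := hK.rk_strictMono _ _ hp2
  omega

lemma rk_map (hK : IncComplex α n rk) (g : α ≃o α) (x : α) : rk (g x) = rk x := by
  have h1 := (rk_mem hK x).1
  have H : ∀ k : ℤ, -1 ≤ k → ∀ y : α, rk y = k → rk (g y) = k := by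
    refine fun k hk => Int.le_induction (motive := fun k _ => ∀ y : α, rk y = k → rk (g y) = k) ?_ ?_ k hk
    · intro y hy
      have hybot : y = ⊥ := (eq_of_le_rk hK bot_le (by rw [hy, hK.rk_bot])).symm
      rw [hybot, map_bot g, hK.rk_bot]
    · intro k hk IH y hy
      have hch : IsChain (· ≤ ·) ({y} : Set α) := Set.Subsingleton.isChain (by simp)
      obtain ⟨Ψ, hsub, hΨ⟩ := exists_flag hK hch
      obtain ⟨w, hwΨ, hwrk⟩ := hK.flag_rk Ψ hΨ k ⟨hk, by have := (rk_mem hK y).2; omega⟩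
      have hwy : w < y := chain_lt hK hΨ.2.1 hwΨ (hsub (by simp)) (by omega)
      have := cover_rk hK hwy (by omega) g (by rw [hwrk]; exact IH w hwrk)
      rw [this, hy]
  exact (H (rk x) h1 x rfl).symm ▸ (H (rk x) h1 x rfl)

end ICAux

namespace ICAux

variable {α : Type*} [PartialOrder α] [BoundedOrder α] {n : ℤ} {rk : α → ℤ}

/-- The subgroup of order automorphisms fixing a point. -/
def fixSub (x : α) : Subgroup (α ≃o α) where
  carrier := {g | g x = x}
  one_mem' := rfl
  mul_mem' := fun {a b} ha hb => by
    show a (b x) = x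
    rw [show b x = x from hb, show a x = x from ha]
  inv_mem' := fun {a} ha => by
    show (a⁻¹ : α ≃o α) x = x
    rw [show (a⁻¹ : α ≃o α) x = a.symm x from rfl]
    exact a.symm_apply_eq.mpr (show a x = x from ha).symm

variable {Γ : Subgroup (α ≃o α)} {F : ℤ → α}

lemma Rset_inv {l : ℤ} {g : α ≃o α} (hg : g ∈ Rset Γ F n l) : g⁻¹ ∈ Rset Γ F n l := by
  refine ⟨inv_mem hg.1, fun j hj hjl => ?_⟩
  show (g⁻¹ : α ≃o α) (F j) = F j
  rw [show (g⁻¹ : α ≃o α) (F j) = g.symm (F j) from rfl]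
  exact g.symm_apply_eq.mpr (hg.2 j hj hjl).symm

lemma closure_le_Γ (S : Set ℤ) :
    Subgroup.closure (⋃ l ∈ S, Rset Γ F n l) ≤ Γ := by
  rw [Subgroup.closure_le]
  rintro x hx
  simp only [Set.mem_iUnion] at hx
  obtain ⟨l, _, hx⟩ := hx
  exact hx.1

lemma closure_fix {S : Set ℤ} {k : ℤ} (hk : k ∈ Set.Icc (-1 : ℤ) n) (hkS : k ∉ S) :
    Subgroup.closure (⋃ l ∈ S, Rset Γ F n l) ≤ fixSub (F k) := by
  rw [Subgroup.closure_le]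
  rintro x hx
  simp only [Set.mem_iUnion] at hx
  obtain ⟨l, hl, hx⟩ := hx
  exact hx.2 k hk (fun h => hkS (h ▸ hl))

section WithData

variable (hK : IncComplex α n rk) (hΓ : FlagTrans Γ)
  (hFflag : IsFlagOf Set.univ (F '' Set.Icc (-1 : ℤ) n))
  (hFrk : ∀ i ∈ Set.Icc (-1 : ℤ) n, rk (F i) = i)

lemma F_mem {k : ℤ} (hk : k ∈ Set.Icc (-1 : ℤ) n) : F k ∈ F '' Set.Icc (-1 : ℤ) n :=
  Set.mem_image_of_mem F hk

include hK hFflag hFrk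

lemma F_le {k l : ℤ} (hk : k ∈ Set.Icc (-1 : ℤ) n) (hl : l ∈ Set.Icc (-1 : ℤ) n)
    (h : k ≤ l) : F k ≤ F l :=
  chain_le hK hFflag.2.1 (F_mem hk) (F_mem hl) (by rw [hFrk k hk, hFrk l hl]; exact h)

lemma F_lt {k l : ℤ} (hk : k ∈ Set.Icc (-1 : ℤ) n) (hl : l ∈ Set.Icc (-1 : ℤ) n)
    (h : k < l) : F k < F l :=
  chain_lt hK hFflag.2.1 (F_mem hk) (F_mem hl) (by rw [hFrk k hk, hFrk l hl]; exact h)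

include hΓ in
/-- Statement (4): an element of `R_m` realizing any flag that contains the base
flag minus its `m`-face. -/
lemma exists_Rset {m : ℤ} (hm : m ∈ Set.Icc (-1 : ℤ) n) {Ψ : Set α}
    (hΨ : IsFlagOf Set.univ Ψ)
    (hsub : ∀ k ∈ Set.Icc (-1 : ℤ) n, k ≠ m → F k ∈ Ψ) :
    ∃ ρ ∈ Rset Γ F n m, ⇑ρ '' (F '' Set.Icc (-1 : ℤ) n) = Ψ := by
  obtain ⟨g, hgΓ, hgim⟩ := hΓ _ _ hFflag hΨ
  refine ⟨g, ⟨hgΓ, ?_⟩, hgim⟩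
  intro k hk hkm
  have h1 : g (F k) ∈ Ψ := hgim ▸ Set.mem_image_of_mem _ (F_mem hk)
  exact face_unique hK hΨ h1 (hsub k hk hkm)
    (by rw [rk_map hK, hFrk k hk])

/-- If `τ` maps the base flag onto `Ψ`, then `τ (F k)` is the rank-`k` face of `Ψ`. -/
lemma map_face {τ : α ≃o α} {Ψ : Set α} (hΨ : IsFlagOf Set.univ Ψ)
    (him : ⇑τ '' (F '' Set.Icc (-1 : ℤ) n) = Ψ) {k : ℤ} (hk : k ∈ Set.Icc (-1 : ℤ) n)
    {x : α} (hx : x ∈ Ψ) (hxr : rk x = k) : τ (F k) = x :=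
  face_unique hK hΨ (him ▸ Set.mem_image_of_mem _ (F_mem hk)) hx
    (by rw [rk_map hK, hFrk k hk, hxr])

end WithData

end ICAux

namespace ICAux

variable {α : Type*} [PartialOrder α] [BoundedOrder α] {n : ℤ} {rk : α → ℤ}
variable {Γ : Subgroup (α ≃o α)} {F : ℤ → α}
variable (hK : IncComplex α n rk) (hΓ : FlagTrans Γ)
  (hFflag : IsFlagOf Set.univ (F '' Set.Icc (-1 : ℤ) n))
  (hFrk : ∀ i ∈ Set.Icc (-1 : ℤ) n, rk (F i) = i)

include hK hΓ hFflag hFrk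

/-- Commutation: `ρ v = v' ρ'` for `ρ ∈ R_a`, `v ∈ R_b`, `a + 2 ≤ b`. -/
lemma comm_RR {a b : ℤ} (ha : a ∈ Set.Icc (-1 : ℤ) n) (hb : b ∈ Set.Icc (-1 : ℤ) n)
    (hab : a + 2 ≤ b) {ρ v : α ≃o α} (hρ : ρ ∈ Rset Γ F n a) (hv : v ∈ Rset Γ F n b) :
    ∃ v' ∈ Rset Γ F n b, ∃ ρ' ∈ Rset Γ F n a, ρ * v = v' * ρ' := by
  have haL := ha.1; have haR := ha.2; have hbL := hb.1; have hbR := hb.2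
  set g : α ≃o α := ρ * v with hg
  have ha1 : a + 1 ∈ Set.Icc (-1 : ℤ) n := ⟨by omega, by omega⟩
  have hgfix : ∀ k ∈ Set.Icc (-1 : ℤ) n, k ≠ a → k ≠ b → g (F k) = F k := by
    intro k hk hka hkb
    show ρ (v (F k)) = F k
    rw [hv.2 k hk hkb, hρ.2 k hk hka]
  -- F a ≤ g (F b)
  have hFa_le : F a ≤ g (F b) := by
    have h1 : (ρ⁻¹ : α ≃o α) (F a) ≤ F (a + 1) := by
      have := (ρ⁻¹ : α ≃o α).monotone (F_le hK hFflag hFrk ha ha1 (by omega))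
      rwa [(Rset_inv hρ).2 (a + 1) ha1 (by omega)] at this
    have h2 : (v⁻¹ : α ≃o α) ((ρ⁻¹ : α ≃o α) (F a)) ≤ F (a + 1) := by
      have := (v⁻¹ : α ≃o α).monotone h1
      rwa [(Rset_inv hv).2 (a + 1) ha1 (by omega)] at this
    have h3 : (g⁻¹ : α ≃o α) (F a) ≤ F b := by
      have : (g⁻¹ : α ≃o α) (F a) = (v⁻¹ : α ≃o α) ((ρ⁻¹ : α ≃o α) (F a)) := rfl
      rw [this]
      exact le_trans h2 (F_le hK hFflag hFrk ha1 hb (by omega))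
    have := g.monotone h3
    rwa [show g ((g⁻¹ : α ≃o α) (F a)) = F a from g.apply_symm_apply _] at this
  -- the modified flag
  have hgb_rk : rk (g (F b)) = b := by rw [rk_map hK, hFrk b hb]
  have hcomp : ∀ k ∈ Set.Icc (-1 : ℤ) n, k ≠ b → (F k ≤ g (F b) ∨ g (F b) ≤ F k) := by
    intro k hk hkb
    rcases lt_or_gt_of_ne (show k ≠ b from hkb) with hlt | hgt
    · left
      by_cases hka : k = a
      · subst hka; exact hFa_le
      · have : g (F k) = F k := hgfix k hk hka hkb
        rw [← this]
        exact g.monotone (F_le hK hFflag hFrk hk hb hlt.le)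
    · right
      have hka : k ≠ a := by omega
      have : g (F k) = F k := hgfix k hk hka hkb
      rw [← this]
      exact g.monotone (F_le hK hFflag hFrk hb hk hgt.le)
  have hFinj : ∀ k ∈ Set.Icc (-1 : ℤ) n, ∀ l ∈ Set.Icc (-1 : ℤ) n, F k = F l → k = l := by
    intro k hk l hl h
    rw [← hFrk k hk, ← hFrk l hl, h]
  set Ψb : Set α := insert (g (F b)) ((F '' Set.Icc (-1 : ℤ) n) \ {F b}) with hΨb
  have hΨb_chain : IsChain (· ≤ ·) Ψb := by
    intro x hx y hy hne
    rcases hx with rfl | ⟨⟨k, hk, rfl⟩, hxb⟩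
    · rcases hy with rfl | ⟨⟨k, hk, rfl⟩, hyb⟩
      · exact absurd rfl hne
      · have hkb : k ≠ b := fun h => hyb (by rw [h]; exact Set.mem_singleton _)
        rcases hcomp k hk hkb with h | h
        · exact Or.inr h
        · exact Or.inl h
    · rcases hy with rfl | ⟨⟨l, hl, rfl⟩, hyb⟩
      · have hkb : k ≠ b := fun h => hxb (by rw [h]; exact Set.mem_singleton _)
        exact hcomp k hk hkb
      · exact hFflag.2.1 (F_mem hk) (F_mem hl) hne
  have hΨb_rk : ∀ k ∈ Set.Icc (-1 : ℤ) n, ∃ x ∈ Ψb, rk x = k := by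
    intro k hk
    by_cases hkb : k = b
    · subst hkb; exact ⟨g (F k), Set.mem_insert _ _, hgb_rk⟩
    · refine ⟨F k, Set.mem_insert_of_mem _ ⟨F_mem hk, ?_⟩, hFrk k hk⟩
      simp only [Set.mem_singleton_iff]
      exact fun h => hkb (hFinj k hk b hb h)
  have hΨb_flag : IsFlagOf Set.univ Ψb := isFlagOf_of hK hΨb_chain hΨb_rk
  obtain ⟨v', hv', hv'im⟩ := exists_Rset hK hΓ hFflag hFrk hb hΨb_flag
    (fun k hk hkb => Set.mem_insert_of_mem _ ⟨F_mem hk, by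
      simp only [Set.mem_singleton_iff]; exact fun h => hkb (hFinj k hk b hb h)⟩)
  have hv'b : v' (F b) = g (F b) :=
    map_face hK hFflag hFrk hΨb_flag hv'im hb (Set.mem_insert _ _) hgb_rk
  refine ⟨v', hv', v'⁻¹ * g, ⟨mul_mem (inv_mem hv'.1) (mul_mem hρ.1 hv.1), ?_⟩, ?_⟩
  · intro k hk hka
    by_cases hkb : k = b
    · subst hkb
      show (v'⁻¹ : α ≃o α) (g (F k)) = F k
      rw [← hv'b]
      exact v'.symm_apply_apply _
    · show (v'⁻¹ : α ≃o α) (g (F k)) = F k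
      rw [hgfix k hk hka hkb]
      exact (Rset_inv hv').2 k hk hkb
  · rw [← mul_assoc, mul_inv_cancel, one_mul]

/-- Commutation: `v ρ = ρ' v'` for `ρ ∈ R_a`, `v ∈ R_b`, `a + 2 ≤ b`. -/
lemma comm_RR' {a b : ℤ} (ha : a ∈ Set.Icc (-1 : ℤ) n) (hb : b ∈ Set.Icc (-1 : ℤ) n)
    (hab : a + 2 ≤ b) {ρ v : α ≃o α} (hρ : ρ ∈ Rset Γ F n a) (hv : v ∈ Rset Γ F n b) :
    ∃ ρ' ∈ Rset Γ F n a, ∃ v' ∈ Rset Γ F n b, v * ρ = ρ' * v' := by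
  have haL := ha.1; have haR := ha.2; have hbL := hb.1; have hbR := hb.2
  set g : α ≃o α := v * ρ with hg
  have ha1 : a + 1 ∈ Set.Icc (-1 : ℤ) n := ⟨by omega, by omega⟩
  have hgfix : ∀ k ∈ Set.Icc (-1 : ℤ) n, k ≠ a → k ≠ b → g (F k) = F k := by
    intro k hk hka hkb
    show v (ρ (F k)) = F k
    rw [hρ.2 k hk hka, hv.2 k hk hkb]
  have hga_rk : rk (g (F a)) = a := by rw [rk_map hK, hFrk a ha]
  have hga_le : g (F a) ≤ F (a + 1) := by
    have h1 : ρ (F a) ≤ F (a + 1) := by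
      have := ρ.monotone (F_le hK hFflag hFrk ha ha1 (by omega))
      rwa [hρ.2 (a + 1) ha1 (by omega)] at this
    have h2 : v (ρ (F a)) ≤ F (a + 1) := by
      have := v.monotone h1
      rwa [hv.2 (a + 1) ha1 (by omega)] at this
    exact h2
  have hcomp : ∀ k ∈ Set.Icc (-1 : ℤ) n, k ≠ a → (F k ≤ g (F a) ∨ g (F a) ≤ F k) := by
    intro k hk hka
    rcases lt_or_gt_of_ne (show k ≠ a from hka) with hlt | hgt
    · left
      have hkb : k ≠ b := by omega
      have : g (F k) = F k := hgfix k hk hka hkb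
      rw [← this]
      exact g.monotone (F_le hK hFflag hFrk hk ha hlt.le)
    · right
      by_cases hkb : k = b
      · subst hkb; exact le_trans hga_le (F_le hK hFflag hFrk ha1 hk (by omega))
      · have : g (F k) = F k := hgfix k hk hka hkb
        rw [← this]
        exact g.monotone (F_le hK hFflag hFrk ha hk hgt.le)
  have hFinj : ∀ k ∈ Set.Icc (-1 : ℤ) n, ∀ l ∈ Set.Icc (-1 : ℤ) n, F k = F l → k = l := by
    intro k hk l hl h
    rw [← hFrk k hk, ← hFrk l hl, h]
  set Ψa : Set α := insert (g (F a)) ((F '' Set.Icc (-1 : ℤ) n) \ {F a}) with hΨa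
  have hΨa_chain : IsChain (· ≤ ·) Ψa := by
    intro x hx y hy hne
    rcases hx with rfl | ⟨⟨k, hk, rfl⟩, hxa⟩
    · rcases hy with rfl | ⟨⟨k, hk, rfl⟩, hya⟩
      · exact absurd rfl hne
      · have hka : k ≠ a := fun h => hya (by rw [h]; exact Set.mem_singleton _)
        rcases hcomp k hk hka with h | h
        · exact Or.inr h
        · exact Or.inl h
    · rcases hy with rfl | ⟨⟨l, hl, rfl⟩, hya⟩
      · have hka : k ≠ a := fun h => hxa (by rw [h]; exact Set.mem_singleton _)
        exact hcomp k hk hka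
      · exact hFflag.2.1 (F_mem hk) (F_mem hl) hne
  have hΨa_rk : ∀ k ∈ Set.Icc (-1 : ℤ) n, ∃ x ∈ Ψa, rk x = k := by
    intro k hk
    by_cases hka : k = a
    · subst hka; exact ⟨g (F k), Set.mem_insert _ _, hga_rk⟩
    · refine ⟨F k, Set.mem_insert_of_mem _ ⟨F_mem hk, ?_⟩, hFrk k hk⟩
      simp only [Set.mem_singleton_iff]
      exact fun h => hka (hFinj k hk a ha h)
  have hΨa_flag : IsFlagOf Set.univ Ψa := isFlagOf_of hK hΨa_chain hΨa_rk
  obtain ⟨ρ', hρ', hρ'im⟩ := exists_Rset hK hΓ hFflag hFrk ha hΨa_flag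
    (fun k hk hka => Set.mem_insert_of_mem _ ⟨F_mem hk, by
      simp only [Set.mem_singleton_iff]; exact fun h => hka (hFinj k hk a ha h)⟩)
  have hρ'a : ρ' (F a) = g (F a) :=
    map_face hK hFflag hFrk hΨa_flag hρ'im ha (Set.mem_insert _ _) hga_rk
  refine ⟨ρ', hρ', ρ'⁻¹ * g, ⟨mul_mem (inv_mem hρ'.1) (mul_mem hv.1 hρ.1), ?_⟩, ?_⟩
  · intro k hk hkb
    by_cases hka : k = a
    · subst hka
      show (ρ'⁻¹ : α ≃o α) (g (F k)) = F k
      rw [← hρ'a]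
      exact ρ'.symm_apply_apply _
    · show (ρ'⁻¹ : α ≃o α) (g (F k)) = F k
      rw [hgfix k hk hka hkb]
      exact (Rset_inv hρ').2 k hk hka
  · rw [← mul_assoc, mul_inv_cancel, one_mul]

end ICAux

namespace ICAux

variable {α : Type*} [PartialOrder α] [BoundedOrder α] {n : ℤ} {rk : α → ℤ}
variable {Γ : Subgroup (α ≃o α)} {F : ℤ → α}

lemma mem_smon {G : Type*} [Group G] {s : Set G} (hs : ∀ x ∈ s, x⁻¹ ∈ s) {x : G}
    (hx : x ∈ Subgroup.closure s) : x ∈ Submonoid.closure s := by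
  induction hx using Subgroup.closure_induction with
  | mem x hx => exact Submonoid.subset_closure hx
  | one => exact one_mem _
  | mul x y _ _ h1 h2 => exact mul_mem h1 h2
  | inv x hx h =>
    clear hx
    induction h using Submonoid.closure_induction with
    | mem y hy => exact Submonoid.subset_closure (hs y hy)
    | one => simpa using one_mem (Submonoid.closure s)
    | mul a b _ _ ha hb => rw [mul_inv_rev]; exact mul_mem hb ha

lemma union_Rset_inv (S : Set ℤ) :
    ∀ x ∈ ⋃ l ∈ S, Rset Γ F n l, x⁻¹ ∈ ⋃ l ∈ S, Rset Γ F n l := by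
  intro x hx
  simp only [Set.mem_iUnion] at hx ⊢
  obtain ⟨l, hl, hx⟩ := hx
  exact ⟨l, hl, Rset_inv hx⟩

section Swap

variable (hK : IncComplex α n rk) (hΓ : FlagTrans Γ)
  (hFflag : IsFlagOf Set.univ (F '' Set.Icc (-1 : ℤ) n))
  (hFrk : ∀ i ∈ Set.Icc (-1 : ℤ) n, rk (F i) = i)
  {i : ℤ} (hi0 : 0 ≤ i) (hin : i ≤ n - 1)

include hK hΓ hFflag hFrk hi0 hin

lemma pushA :
    ∀ y ∈ Subgroup.closure (⋃ l ∈ Set.Icc (i + 1) n, Rset Γ F n l),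
      ∀ u ∈ ⋃ l ∈ Set.Icc (-1 : ℤ) (i - 1), Rset Γ F n l,
        ∃ y' ∈ Subgroup.closure (⋃ l ∈ Set.Icc (i + 1) n, Rset Γ F n l),
          ∃ u' ∈ ⋃ l ∈ Set.Icc (-1 : ℤ) (i - 1), Rset Γ F n l, u * y = y' * u' := by
  intro y hy
  have hy' := mem_smon (union_Rset_inv _) hy
  clear hy
  induction hy' using Submonoid.closure_induction with
  | mem v hv =>
    intro u hu
    simp only [Set.mem_iUnion] at hu hv
    obtain ⟨a, ha, hu⟩ := hu
    obtain ⟨b, hb, hv⟩ := hv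
    have ha' : a ∈ Set.Icc (-1 : ℤ) n := ⟨ha.1, by have := ha.2; omega⟩
    have hb' : b ∈ Set.Icc (-1 : ℤ) n := ⟨by have := hb.1; omega, hb.2⟩
    obtain ⟨v', hv', ρ', hρ', heq⟩ := comm_RR hK hΓ hFflag hFrk ha' hb'
      (by have := ha.2; have := hb.1; omega) hu hv
    refine ⟨v', Subgroup.subset_closure ?_, ρ', ?_, heq⟩
    · simp only [Set.mem_iUnion]; exact ⟨b, hb, hv'⟩
    · simp only [Set.mem_iUnion]; exact ⟨a, ha, hρ'⟩
  | one =>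
    intro u hu
    exact ⟨1, one_mem _, u, hu, by rw [mul_one, one_mul]⟩
  | mul y₁ y₂ hy₁ hy₂ H1 H2 =>
    intro u hu
    obtain ⟨y₁', hy₁', u₁, hu₁, heq₁⟩ := H1 u hu
    obtain ⟨y₂', hy₂', u₂, hu₂, heq₂⟩ := H2 u₁ hu₁
    refine ⟨y₁' * y₂', mul_mem hy₁' hy₂', u₂, hu₂, ?_⟩
    rw [← mul_assoc, heq₁, mul_assoc, heq₂, mul_assoc]

lemma pushB :
    ∀ x ∈ Subgroup.closure (⋃ l ∈ Set.Icc (-1 : ℤ) (i - 1), Rset Γ F n l),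
      ∀ y ∈ Subgroup.closure (⋃ l ∈ Set.Icc (i + 1) n, Rset Γ F n l),
        x * y ∈ (↑(Subgroup.closure (⋃ l ∈ Set.Icc (i + 1) n, Rset Γ F n l)) : Set (α ≃o α)) *
          ↑(Subgroup.closure (⋃ l ∈ Set.Icc (-1 : ℤ) (i - 1), Rset Γ F n l)) := by
  intro x hx
  have hx' := mem_smon (union_Rset_inv _) hx
  clear hx
  induction hx' using Submonoid.closure_induction with
  | mem u hu =>
    intro y hy
    obtain ⟨y', hy', u', hu', heq⟩ := pushA hK hΓ hFflag hFrk hi0 hin y hy u hu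
    exact Set.mem_mul.mpr ⟨y', hy', u', Subgroup.subset_closure hu', heq.symm⟩
  | one =>
    intro y hy
    exact Set.mem_mul.mpr ⟨y, hy, 1, one_mem _, by rw [mul_one, one_mul]⟩
  | mul x₁ x₂ hx₁ hx₂ H1 H2 =>
    intro y hy
    obtain ⟨y₂, hy₂, m₂, hm₂, heq₂⟩ := Set.mem_mul.mp (H2 y hy)
    obtain ⟨y₁, hy₁, m₁, hm₁, heq₁⟩ := Set.mem_mul.mp (H1 y₂ hy₂)
    refine Set.mem_mul.mpr ⟨y₁, hy₁, m₁ * m₂, mul_mem hm₁ hm₂, ?_⟩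
    calc y₁ * (m₁ * m₂) = (y₁ * m₁) * m₂ := by rw [mul_assoc]
      _ = (x₁ * y₂) * m₂ := by rw [heq₁]
      _ = x₁ * (y₂ * m₂) := by rw [mul_assoc]
      _ = x₁ * (x₂ * y) := by rw [heq₂]
      _ = x₁ * x₂ * y := by rw [mul_assoc]

lemma swap_split :
    ∀ x ∈ Subgroup.closure ((⋃ l ∈ Set.Icc (-1 : ℤ) (i - 1), Rset Γ F n l) ∪
        ⋃ l ∈ Set.Icc (i + 1) n, Rset Γ F n l),
      x ∈ (↑(Subgroup.closure (⋃ l ∈ Set.Icc (i + 1) n, Rset Γ F n l)) : Set (α ≃o α)) *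
        ↑(Subgroup.closure (⋃ l ∈ Set.Icc (-1 : ℤ) (i - 1), Rset Γ F n l)) := by
  intro x hx
  have hinv : ∀ z ∈ (⋃ l ∈ Set.Icc (-1 : ℤ) (i - 1), Rset Γ F n l) ∪
      ⋃ l ∈ Set.Icc (i + 1) n, Rset Γ F n l,
      z⁻¹ ∈ (⋃ l ∈ Set.Icc (-1 : ℤ) (i - 1), Rset Γ F n l) ∪
        ⋃ l ∈ Set.Icc (i + 1) n, Rset Γ F n l := by
    rintro z (hz | hz)
    · exact Or.inl (union_Rset_inv _ z hz)
    · exact Or.inr (union_Rset_inv _ z hz)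
  have hx' := mem_smon hinv hx
  clear hx
  induction hx' using Submonoid.closure_induction with
  | mem u hu =>
    rcases hu with hu | hu
    · exact Set.mem_mul.mpr ⟨1, one_mem _, u, Subgroup.subset_closure hu, one_mul u⟩
    · exact Set.mem_mul.mpr ⟨u, Subgroup.subset_closure hu, 1, one_mem _, mul_one u⟩
  | one =>
    exact Set.mem_mul.mpr ⟨1, one_mem _, 1, one_mem _, mul_one 1⟩
  | mul x₁ x₂ hx₁ hx₂ H1 H2 =>
    obtain ⟨p₁, hp₁, q₁, hq₁, he₁⟩ := Set.mem_mul.mp H1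
    obtain ⟨p₂, hp₂, q₂, hq₂, he₂⟩ := Set.mem_mul.mp H2
    obtain ⟨p₃, hp₃, q₃, hq₃, he₃⟩ := Set.mem_mul.mp
      (pushB hK hΓ hFflag hFrk hi0 hin q₁ hq₁ p₂ hp₂)
    refine Set.mem_mul.mpr ⟨p₁ * p₃, mul_mem hp₁ hp₃, q₃ * q₂, mul_mem hq₃ hq₂, ?_⟩
    calc p₁ * p₃ * (q₃ * q₂) = p₁ * (p₃ * q₃) * q₂ := by group
      _ = p₁ * (q₁ * p₂) * q₂ := by rw [he₃]
      _ = (p₁ * q₁) * (p₂ * q₂) := by group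
      _ = x₁ * x₂ := by rw [he₁, he₂]

end Swap

end ICAux

namespace ICAux

variable {α : Type*} [PartialOrder α] [BoundedOrder α] {n : ℤ} {rk : α → ℤ}
variable {Γ : Subgroup (α ≃o α)} {F : ℤ → α}
variable (hK : IncComplex α n rk) (hΓ : FlagTrans Γ)
  (hFflag : IsFlagOf Set.univ (F '' Set.Icc (-1 : ℤ) n))
  (hFrk : ∀ i ∈ Set.Icc (-1 : ℤ) n, rk (F i) = i)

include hK hΓ hFflag hFrk

/-- Main transitivity: the subgroup generated by the `R_l` with `l` outside `J`
acts transitively on the flags containing `{F k : k ∈ J}`. -/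
lemma gen :
    ∀ N : ℕ, ∀ J : Set ℤ, J ⊆ Set.Icc (-1 : ℤ) n → (-1 : ℤ) ∈ J → n ∈ J →
      (Set.Icc (-1 : ℤ) n \ J).ncard ≤ N →
      ∀ Ψ : Set α, IsFlagOf Set.univ Ψ → (∀ k ∈ J, F k ∈ Ψ) →
      ∃ τ ∈ Subgroup.closure (⋃ l ∈ Set.Icc (-1 : ℤ) n \ J, Rset Γ F n l),
        ⇑τ '' (F '' Set.Icc (-1 : ℤ) n) = Ψ := by
  intro N
  induction N with
  | zero =>
    intro J hJsub hJbot hJtop hcard Ψ hΨ hΨJ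
    have hfin : (Set.Icc (-1 : ℤ) n \ J).Finite := (Set.finite_Icc _ _).diff
    have hempty : Set.Icc (-1 : ℤ) n \ J = ∅ := by
      have := Set.ncard_eq_zero hfin
      rw [← this]; omega
    have hsub : F '' Set.Icc (-1 : ℤ) n ⊆ Ψ := by
      rintro x ⟨k, hk, rfl⟩
      have hkJ : k ∈ J := by
        by_contra h
        exact absurd (show k ∈ Set.Icc (-1 : ℤ) n \ J from ⟨hk, h⟩) (by rw [hempty]; simp)
      exact hΨJ k hkJ
    have hEq := hFflag.2.2 Ψ (Set.subset_univ _) hΨ.2.1 hsub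
    exact ⟨1, one_mem _, by rw [show ⇑(1 : α ≃o α) = id from rfl, Set.image_id, hEq]⟩
  | succ N IH =>
    intro J hJsub hJbot hJtop hcard Ψ hΨ hΨJ
    have hfin : (Set.Icc (-1 : ℤ) n \ J).Finite := (Set.finite_Icc _ _).diff
    by_cases hdiff : Set.Icc (-1 : ℤ) n \ J = ∅
    · have hsub : F '' Set.Icc (-1 : ℤ) n ⊆ Ψ := by
        rintro x ⟨k, hk, rfl⟩
        have hkJ : k ∈ J := by
          by_contra h
          exact absurd (show k ∈ Set.Icc (-1 : ℤ) n \ J from ⟨hk, h⟩) (by rw [hdiff]; simp)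
        exact hΨJ k hkJ
      have hEq := hFflag.2.2 Ψ (Set.subset_univ _) hΨ.2.1 hsub
      exact ⟨1, one_mem _, by rw [show ⇑(1 : α ≃o α) = id from rfl, Set.image_id, hEq]⟩
    · obtain ⟨m, hm⟩ := Set.nonempty_iff_ne_empty.mpr hdiff
      have hmIcc : m ∈ Set.Icc (-1 : ℤ) n := hm.1
      have hmJ : m ∉ J := hm.2
      obtain ⟨a, ⟨haJ, ham⟩, haub⟩ := Int.exists_greatest_of_bdd
        (P := fun z => z ∈ J ∧ z < m) ⟨m, fun z hz => hz.2.le⟩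
        ⟨-1, hJbot, lt_of_le_of_ne hmIcc.1 (fun h => hmJ (h ▸ hJbot))⟩
      obtain ⟨b, ⟨hbJ, hmb⟩, hblb⟩ := Int.exists_least_of_bdd
        (P := fun z => z ∈ J ∧ m < z) ⟨m, fun z hz => hz.2.le⟩
        ⟨n, hJtop, lt_of_le_of_ne hmIcc.2 (fun h => hmJ (h.symm ▸ hJtop))⟩
      have hgap : ∀ k ∈ J, ¬(a < k ∧ k < b) := by
        rintro k hk ⟨h1, h2⟩
        rcases lt_trichotomy k m with h | h | h
        · exact absurd (haub k ⟨hk, h⟩) (by omega)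
        · exact hmJ (h ▸ hk)
        · exact absurd (hblb k ⟨hk, h⟩) (by omega)
      have haIcc : a ∈ Set.Icc (-1 : ℤ) n := hJsub haJ
      have hbIcc : b ∈ Set.Icc (-1 : ℤ) n := hJsub hbJ
      obtain ⟨G, hGΨ, hGrk⟩ := hK.flag_rk Ψ hΨ m hmIcc
      have hFaG : F a < G := chain_lt hK hΨ.2.1 (hΨJ a haJ) hGΨ
        (by rw [hFrk a haIcc, hGrk]; omega)
      have hGFb : G < F b := chain_lt hK hΨ.2.1 hGΨ (hΨJ b hbJ)
        (by rw [hFrk b hbIcc, hGrk]; omega)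
      -- comparability of section elements with the J-faces
      have hcmpJ : ∀ k ∈ J, ∀ w : α, F a < w → w < F b → (F k ≤ w ∨ w ≤ F k) := by
        intro k hk w h1 h2
        rcases le_or_gt k a with h | h
        · exact Or.inl (le_trans (F_le hK hFflag hFrk (hJsub hk) haIcc h) h1.le)
        · have hbk : b ≤ k := by
            by_contra hc
            exact hgap k hk ⟨h, by omega⟩
          exact Or.inr (le_trans h2.le (F_le hK hFflag hFrk hbIcc (hJsub hk) hbk))
      -- the conjugation step
      have hconj : ∀ Ξ : Set α, IsFlagOf Set.univ Ξ →
          (∃ τ ∈ Subgroup.closure (⋃ l ∈ Set.Icc (-1 : ℤ) n \ J, Rset Γ F n l),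
            ⇑τ '' (F '' Set.Icc (-1 : ℤ) n) = Ξ) →
          ∀ x ∈ Ξ, rk x ∉ J →
          ∀ Ξ' : Set α, IsFlagOf Set.univ Ξ' → (∀ k ∈ J, F k ∈ Ξ') → x ∈ Ξ' →
          ∃ τ' ∈ Subgroup.closure (⋃ l ∈ Set.Icc (-1 : ℤ) n \ J, Rset Γ F n l),
            ⇑τ' '' (F '' Set.Icc (-1 : ℤ) n) = Ξ' := by
        rintro Ξ hΞ ⟨τ, hτ, hτim⟩ x hxΞ hxJ Ξ' hΞ' hΞ'J hxΞ'
        have hrIcc : rk x ∈ Set.Icc (-1 : ℤ) n := rk_mem hK x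
        have hmeas : (Set.Icc (-1 : ℤ) n \ insert (rk x) J).ncard ≤ N := by
          have heq : Set.Icc (-1 : ℤ) n \ insert (rk x) J
              = (Set.Icc (-1 : ℤ) n \ J) \ {rk x} := by
            ext z
            simp only [Set.mem_diff, Set.mem_insert_iff, Set.mem_singleton_iff]
            tauto
          have hlt := Set.ncard_diff_singleton_lt_of_mem
            (show rk x ∈ Set.Icc (-1 : ℤ) n \ J from ⟨hrIcc, hxJ⟩) hfin
          rw [heq]; omega
        have hflag' : IsFlagOf Set.univ (⇑(τ⁻¹ : α ≃o α) '' Ξ') := image_flag _ hΞ'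
        have hτx : τ (F (rk x)) = x := map_face hK hFflag hFrk hΞ hτim hrIcc hxΞ rfl
        have hcont : ∀ k ∈ insert (rk x) J, F k ∈ ⇑(τ⁻¹ : α ≃o α) '' Ξ' := by
          intro k hk
          rcases Set.mem_insert_iff.mp hk with hk' | hk'
          · subst hk'
            exact ⟨x, hxΞ', (τ.symm_apply_eq).mpr hτx.symm⟩
          · have hfix : τ⁻¹ ∈ fixSub (F k) :=
              (fixSub (F k)).inv_mem
                ((closure_fix (hJsub hk') (fun hc => hc.2 hk')) hτ)
            exact ⟨F k, hΞ'J k hk', hfix⟩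
        obtain ⟨σ, hσ, hσim⟩ := IH (insert (rk x) J) (Set.insert_subset hrIcc hJsub)
          (Set.mem_insert_of_mem _ hJbot) (Set.mem_insert_of_mem _ hJtop) hmeas
          _ hflag' hcont
        have hsubJ : Set.Icc (-1 : ℤ) n \ insert (rk x) J ⊆ Set.Icc (-1 : ℤ) n \ J :=
          fun z hz => ⟨hz.1, fun h => hz.2 (Set.mem_insert_of_mem _ h)⟩
        refine ⟨τ * σ, mul_mem hτ (Subgroup.closure_mono
          (Set.biUnion_subset_biUnion_left hsubJ) hσ), ?_⟩
        rw [show ⇑(τ * σ) = ⇑τ ∘ ⇑σ from rfl, Set.image_comp, hσim, img_inv]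
      -- obtain a reachable flag containing G (and the J-faces)
      have hreachG : ∃ Ξ : Set α, IsFlagOf Set.univ Ξ ∧ (∀ k ∈ J, F k ∈ Ξ) ∧ G ∈ Ξ ∧
          ∃ τ ∈ Subgroup.closure (⋃ l ∈ Set.Icc (-1 : ℤ) n \ J, Rset Γ F n l),
            ⇑τ '' (F '' Set.Icc (-1 : ℤ) n) = Ξ := by
        rcases eq_or_lt_of_le (show a + 2 ≤ b by omega) with hgap2 | hgap3
        · -- gap exactly 2 : m = a + 1
          have hmeq : m = a + 1 := by omega
          have hcG : IsChain (· ≤ ·) (insert G (F '' J)) := by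
            rintro p (rfl | ⟨k, hk, rfl⟩) q (rfl | ⟨l, hl, rfl⟩) hne
            · exact absurd rfl hne
            · exact (hcmpJ l hl p hFaG hGFb).symm
            · exact hcmpJ k hk q hFaG hGFb
            · exact hFflag.2.1 (F_mem (hJsub hk)) (F_mem (hJsub hl)) hne
          obtain ⟨Ξ', hc'Ξ', hΞ'flag⟩ := exists_flag hK hcG
          have hGΞ' : G ∈ Ξ' := hc'Ξ' (Set.mem_insert _ _)
          have hFJΞ' : ∀ k ∈ J, F k ∈ Ξ' := fun k hk =>
            hc'Ξ' (Set.mem_insert_of_mem _ ⟨k, hk, rfl⟩)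
          -- the comparison of non-G faces of Ξ' with F m
          have hcmpFm : ∀ x ∈ Ξ', x ≠ G → (x ≤ F m ∨ F m ≤ x) := by
            intro x hxΞ' hxG
            have hrkx : rk x ≠ m := by
              intro h
              exact hxG (face_unique hK hΞ'flag hxΞ' hGΞ' (by rw [h, hGrk]))
            have hrxIcc := rk_mem hK x
            rcases le_or_gt (rk x) a with h | h
            · left
              have hxa : x ≤ F a := chain_le hK hΞ'flag.2.1 hxΞ' (hFJΞ' a haJ)
                (by rw [hFrk a haIcc]; exact h)
              exact le_trans hxa (F_le hK hFflag hFrk haIcc hmIcc (by omega))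
            · right
              have hbx : b ≤ rk x := by omega
              have hbxle : F b ≤ x := chain_le hK hΞ'flag.2.1 (hFJΞ' b hbJ) hxΞ'
                (by rw [hFrk b hbIcc]; exact hbx)
              exact le_trans (F_le hK hFflag hFrk hmIcc hbIcc (by omega)) hbxle
          -- the flag Ξ'' obtained by replacing G with F m
          have hΞ''chain : IsChain (· ≤ ·) (insert (F m) (Ξ' \ {G})) := by
            rintro p (rfl | ⟨hpΞ', hpG⟩) q (rfl | ⟨hqΞ', hqG⟩) hne
            · exact absurd rfl hne
            · exact (hcmpFm q hqΞ' (fun h => hqG (by rw [h]; exact Set.mem_singleton _))).symm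
            · exact hcmpFm p hpΞ' (fun h => hpG (by rw [h]; exact Set.mem_singleton _))
            · exact hΞ'flag.2.1 hpΞ' hqΞ' hne
          have hΞ''rk : ∀ k ∈ Set.Icc (-1 : ℤ) n, ∃ x ∈ insert (F m) (Ξ' \ {G}), rk x = k := by
            intro k hk
            by_cases hkm : k = m
            · exact ⟨F m, Set.mem_insert _ _, by rw [hFrk m hmIcc, hkm]⟩
            · obtain ⟨xk, hxk, hxkr⟩ := hK.flag_rk Ξ' hΞ'flag k hk
              refine ⟨xk, Set.mem_insert_of_mem _ ⟨hxk, ?_⟩, hxkr⟩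
              simp only [Set.mem_singleton_iff]
              intro hh
              exact hkm (by rw [← hxkr, hh, hGrk])
          have hΞ''flag : IsFlagOf Set.univ (insert (F m) (Ξ' \ {G})) :=
            isFlagOf_of hK hΞ''chain hΞ''rk
          have hmeas : (Set.Icc (-1 : ℤ) n \ insert m J).ncard ≤ N := by
            have heq : Set.Icc (-1 : ℤ) n \ insert m J
                = (Set.Icc (-1 : ℤ) n \ J) \ {m} := by
              ext z
              simp only [Set.mem_diff, Set.mem_insert_iff, Set.mem_singleton_iff]
              tauto
            have hlt := Set.ncard_diff_singleton_lt_of_mem hm hfin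
            rw [heq]; omega
          have hΞ''cont : ∀ k ∈ insert m J, F k ∈ insert (F m) (Ξ' \ {G}) := by
            intro k hk
            rcases Set.mem_insert_iff.mp hk with rfl | hk'
            · exact Set.mem_insert _ _
            · refine Set.mem_insert_of_mem _ ⟨hFJΞ' k hk', ?_⟩
              simp only [Set.mem_singleton_iff]
              intro hh
              have : (k : ℤ) = m := by
                rw [← hFrk k (hJsub hk'), hh, hGrk]
              exact hmJ (this ▸ hk')
          obtain ⟨τ'', hτ'', hτ''im⟩ := IH (insert m J) (Set.insert_subset hmIcc hJsub)
            (Set.mem_insert_of_mem _ hJbot) (Set.mem_insert_of_mem _ hJtop) hmeas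
            _ hΞ''flag hΞ''cont
          have hsubJm : Set.Icc (-1 : ℤ) n \ insert m J ⊆ Set.Icc (-1 : ℤ) n \ J :=
            fun z hz => ⟨hz.1, fun h => hz.2 (Set.mem_insert_of_mem _ h)⟩
          have hτ''J : τ'' ∈ Subgroup.closure (⋃ l ∈ Set.Icc (-1 : ℤ) n \ J, Rset Γ F n l) :=
            Subgroup.closure_mono (Set.biUnion_subset_biUnion_left hsubJm) hτ''
          have hpre : IsFlagOf Set.univ (⇑(τ''⁻¹ : α ≃o α) '' Ξ') := image_flag _ hΞ'flag
          have hpresub : ∀ k ∈ Set.Icc (-1 : ℤ) n, k ≠ m → F k ∈ ⇑(τ''⁻¹ : α ≃o α) '' Ξ' := by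
            intro k hk hkm
            obtain ⟨xk, hxk, hxkr⟩ := hK.flag_rk Ξ' hΞ'flag k hk
            have hxkΞ'' : xk ∈ insert (F m) (Ξ' \ {G}) := by
              refine Set.mem_insert_of_mem _ ⟨hxk, ?_⟩
              simp only [Set.mem_singleton_iff]
              intro hh
              exact hkm (by rw [← hxkr, hh, hGrk])
            have hτ''k : τ'' (F k) = xk :=
              map_face hK hFflag hFrk hΞ''flag hτ''im hk hxkΞ'' hxkr
            exact ⟨xk, hxk, by rw [← hτ''k]; exact τ''.symm_apply_apply _⟩
          obtain ⟨ρ, hρ, hρim⟩ := exists_Rset hK hΓ hFflag hFrk hmIcc hpre hpresub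
          refine ⟨Ξ', hΞ'flag, hFJΞ', hGΞ', τ'' * ρ,
            mul_mem hτ''J (Subgroup.subset_closure ?_), ?_⟩
          · simp only [Set.mem_iUnion]
            exact ⟨m, hm, hρ⟩
          · rw [show ⇑(τ'' * ρ) = ⇑τ'' ∘ ⇑ρ from rfl, Set.image_comp, hρim, img_inv]
        · -- gap at least 3 : use strong connectivity
          have hconn := hK.strong_conn (F a) (F b)
            (F_le hK hFflag hFrk haIcc hbIcc (by omega))
            (by rw [hFrk a haIcc, hFrk b hbIcc]; omega)
          have hFam : F a < F m := F_lt hK hFflag hFrk haIcc hmIcc ham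
          have hFmb : F m < F b := F_lt hK hFflag hFrk hmIcc hbIcc hmb
          have hpath := hconn (F m) G hFam hFmb hFaG hGFb
          have hinvr : ∀ z : α, Relation.ReflTransGen
              (fun p q => F a < p ∧ p < F b ∧ F a < q ∧ q < F b ∧ (p ≤ q ∨ q ≤ p))
              (F m) z →
              ∃ Ξ : Set α, IsFlagOf Set.univ Ξ ∧ (∀ k ∈ J, F k ∈ Ξ) ∧ z ∈ Ξ ∧
                ∃ τ ∈ Subgroup.closure (⋃ l ∈ Set.Icc (-1 : ℤ) n \ J, Rset Γ F n l),
                  ⇑τ '' (F '' Set.Icc (-1 : ℤ) n) = Ξ := by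
            intro z hz
            induction hz with
            | refl =>
              exact ⟨F '' Set.Icc (-1 : ℤ) n, hFflag,
                fun k hk => F_mem (hJsub hk), F_mem hmIcc,
                1, one_mem _, by rw [show ⇑(1 : α ≃o α) = id from rfl, Set.image_id]⟩
            | @tail y z hsteps hrel ihp =>
              obtain ⟨Ξ, hΞ, hΞJ, hyΞ, hreach⟩ := ihp
              obtain ⟨hFay, hyFb, hFaz, hzFb, hcmp⟩ := hrel
              have hrky : a < rk y ∧ rk y < b := by
                constructor
                · have := hK.rk_strictMono _ _ hFay; rwa [hFrk a haIcc] at this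
                · have := hK.rk_strictMono _ _ hyFb; rwa [hFrk b hbIcc] at this
              have hrkyJ : rk y ∉ J := fun h => hgap _ h ⟨hrky.1, hrky.2⟩
              have hc' : IsChain (· ≤ ·) (insert y (insert z (F '' J))) := by
                rintro p (rfl | (rfl | ⟨k, hk, rfl⟩)) q (rfl | (rfl | ⟨l, hl, rfl⟩)) hne
                · exact absurd rfl hne
                · exact hcmp
                · exact (hcmpJ l hl p hFay hyFb).symm
                · exact hcmp.symm
                · exact absurd rfl hne
                · exact (hcmpJ l hl p hFaz hzFb).symm
                · exact hcmpJ k hk q hFay hyFb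
                · exact hcmpJ k hk q hFaz hzFb
                · exact hFflag.2.1 (F_mem (hJsub hk)) (F_mem (hJsub hl)) hne
              obtain ⟨Ξ', hc'Ξ', hΞ'flag⟩ := exists_flag hK hc'
              refine ⟨Ξ', hΞ'flag,
                fun k hk => hc'Ξ' (Set.mem_insert_of_mem _
                  (Set.mem_insert_of_mem _ ⟨k, hk, rfl⟩)),
                hc'Ξ' (Set.mem_insert_of_mem _ (Set.mem_insert _ _)), ?_⟩
              exact hconj Ξ hΞ hreach y hyΞ hrkyJ Ξ' hΞ'flag
                (fun k hk => hc'Ξ' (Set.mem_insert_of_mem _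
                  (Set.mem_insert_of_mem _ ⟨k, hk, rfl⟩)))
                (hc'Ξ' (Set.mem_insert _ _))
          obtain ⟨Ξ, hΞ, hΞJ, hGΞ, hreach⟩ := hinvr G hpath
          exact ⟨Ξ, hΞ, hΞJ, hGΞ, hreach⟩
      obtain ⟨Ξ, hΞ, hΞJ, hGΞ, hreach⟩ := hreachG
      exact hconj Ξ hΞ hreach G hGΞ (by rw [hGrk]; exact hmJ) Ψ hΨ hΨJ hGΨ

end ICAux

open ICAux in
/-- characterization of the partial order of a regular incidence
complex in terms of a flag-transitive subgroup: for `0 ≤ i ≤ j ≤ n-1` and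
`φ, ψ ∈ Γ` the conditions (a) `F_i φ ≤ F_j ψ`, (b) `φψ⁻¹ ∈ Γ_{i+1}^+ Γ_{j-1}^-`,
and (c) `Γ_i φ ∩ Γ_j ψ ≠ ∅` are equivalent. -/
theorem incidence_characterization
    {α : Type*} [PartialOrder α] [BoundedOrder α] (n : ℤ) (rk : α → ℤ)
    (hn : 1 ≤ n) (hK : IncComplex α n rk)
    (Γ : Subgroup (α ≃o α)) (hΓ : FlagTrans Γ)
    (F : ℤ → α) (hFflag : IsFlagOf Set.univ (F '' Set.Icc (-1 : ℤ) n))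
    (hFrk : ∀ i ∈ Set.Icc (-1 : ℤ) n, rk (F i) = i)
    (i j : ℤ) (h0i : 0 ≤ i) (hij : i ≤ j) (hj : j ≤ n - 1)
    (φ ψ : α ≃o α) (hφ : φ ∈ Γ) (hψ : ψ ∈ Γ) :
    List.TFAE
      [ rAct (F i) φ ≤ rAct (F j) ψ,
        φ * ψ⁻¹ ∈
          (↑(Subgroup.closure (⋃ l ∈ Set.Icc (i + 1) n, Rset Γ F n l)) :
              Set (α ≃o α)) *
            ↑(Subgroup.closure (⋃ l ∈ Set.Icc (-1 : ℤ) (j - 1), Rset Γ F n l)),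
        (((↑(Subgroup.closure (⋃ k ∈ Set.Icc (-1 : ℤ) n \ {i}, Rset Γ F n k)) :
              Set (α ≃o α)) * {φ}) ∩
            ((↑(Subgroup.closure
                (⋃ k ∈ Set.Icc (-1 : ℤ) n \ {j}, Rset Γ F n k)) :
              Set (α ≃o α)) * {ψ})).Nonempty ] := by
  have hiIcc : i ∈ Set.Icc (-1 : ℤ) n := ⟨by omega, by omega⟩
  have hjIcc : j ∈ Set.Icc (-1 : ℤ) n := ⟨by omega, by omega⟩
  have hm1Icc : (-1 : ℤ) ∈ Set.Icc (-1 : ℤ) n := ⟨le_refl _, by omega⟩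
  have hnIcc : n ∈ Set.Icc (-1 : ℤ) n := ⟨by omega, le_refl _⟩
  have hFbot : F (-1) = ⊥ :=
    (eq_of_le_rk hK bot_le (by rw [hFrk (-1) hm1Icc, hK.rk_bot])).symm
  have hFtop : F n = ⊤ :=
    eq_of_le_rk hK le_top (by rw [hFrk n hnIcc, hK.rk_top])
  tfae_have 1 → 2 := by
    intro h1
    have h1' : (φ⁻¹ : α ≃o α) (F i) ≤ (ψ⁻¹ : α ≃o α) (F j) := h1
    set χ : α ≃o α := φ * ψ⁻¹ with hχ
    have hχΓ : χ ∈ Γ := mul_mem hφ (inv_mem hψ)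
    have hχle : (χ⁻¹ : α ≃o α) (F i) ≤ F j := by
      have hrw : (χ⁻¹ : α ≃o α) = ψ * φ⁻¹ := by rw [hχ, mul_inv_rev, inv_inv]
      rw [hrw]
      show ψ ((φ⁻¹ : α ≃o α) (F i)) ≤ F j
      have := ψ.monotone h1'
      exact le_trans this (le_of_eq (ψ.apply_symm_apply (F j)))
    set x : α := (χ⁻¹ : α ≃o α) (F i) with hx
    have hxrk : rk x = i := by rw [hx, rk_map hK, hFrk i hiIcc]
    set J₁ : Set ℤ := insert (-1) (Set.Icc j n) with hJ₁
    have hJ₁sub : J₁ ⊆ Set.Icc (-1 : ℤ) n := by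
      rintro k (rfl | hk)
      · exact hm1Icc
      · exact ⟨by have := hk.1; omega, hk.2⟩
    have hxcmp : ∀ l ∈ J₁, x ≤ F l ∨ F l ≤ x := by
      rintro l (rfl | hl)
      · exact Or.inr (hFbot ▸ bot_le)
      · exact Or.inl (le_trans hχle (F_le hK hFflag hFrk hjIcc (hJ₁sub (Set.mem_insert_of_mem _ hl)) hl.1))
    have hchain : IsChain (· ≤ ·) (insert x (F '' J₁)) := by
      rintro p (rfl | ⟨k, hk, rfl⟩) q (rfl | ⟨l, hl, rfl⟩) hne
      · exact absurd rfl hne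
      · exact hxcmp l hl
      · exact (hxcmp k hk).symm
      · exact hFflag.2.1 (F_mem (hJ₁sub hk)) (F_mem (hJ₁sub hl)) hne
    obtain ⟨Ψ₁, hcΨ₁, hΨ₁⟩ := exists_flag hK hchain
    obtain ⟨τ, hτ, hτim⟩ := gen hK hΓ hFflag hFrk ((Set.Icc (-1 : ℤ) n \ J₁).ncard)
      J₁ hJ₁sub (Set.mem_insert _ _)
      (Set.mem_insert_of_mem _ ⟨by omega, le_refl _⟩) le_rfl Ψ₁ hΨ₁
      (fun k hk => hcΨ₁ (Set.mem_insert_of_mem _ ⟨k, hk, rfl⟩))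
    have hτM : τ ∈ Subgroup.closure (⋃ l ∈ Set.Icc (-1 : ℤ) (j - 1), Rset Γ F n l) := by
      refine Subgroup.closure_mono (Set.biUnion_subset_biUnion_left ?_) hτ
      intro z hz
      have h2 : z ∉ Set.Icc j n := fun h => hz.2 (Set.mem_insert_of_mem _ h)
      simp only [Set.mem_Icc, not_and, not_le] at h2
      have hz1 := hz.1.1
      have hz2 := hz.1.2
      exact ⟨hz1, by omega⟩
    have hτFi : τ (F i) = x :=
      map_face hK hFflag hFrk hΨ₁ hτim hiIcc (hcΨ₁ (Set.mem_insert _ _)) hxrk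
    set g : α ≃o α := χ * τ with hg
    have hgFi : g (F i) = F i := by
      show χ (τ (F i)) = F i
      rw [hτFi, hx]
      exact χ.apply_symm_apply _
    have hgΓ : g ∈ Γ := mul_mem hχΓ (closure_le_Γ _ hτ)
    have hΨ₂ : IsFlagOf Set.univ (⇑g '' (F '' Set.Icc (-1 : ℤ) n)) := image_flag g hFflag
    set J₂ : Set ℤ := insert (-1) (insert i {n}) with hJ₂
    have hJ₂sub : J₂ ⊆ Set.Icc (-1 : ℤ) n := by
      intro k hk
      rcases Set.mem_insert_iff.mp hk with h | h
      · rw [h]; exact hm1Icc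
      · rcases Set.mem_insert_iff.mp h with h' | h'
        · rw [h']; exact hiIcc
        · rw [Set.mem_singleton_iff.mp h']; exact hnIcc
    have hΨ₂J : ∀ k ∈ J₂, F k ∈ ⇑g '' (F '' Set.Icc (-1 : ℤ) n) := by
      intro k hk
      rcases Set.mem_insert_iff.mp hk with h | h
      · rw [h]; exact ⟨F (-1), F_mem hm1Icc, by rw [hFbot]; exact map_bot g⟩
      · rcases Set.mem_insert_iff.mp h with h' | h'
        · rw [h']; exact ⟨F i, F_mem hiIcc, hgFi⟩
        · rw [Set.mem_singleton_iff.mp h']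
          exact ⟨F n, F_mem hnIcc, by rw [hFtop]; exact map_top g⟩
    obtain ⟨σ₀, hσ₀, hσ₀im⟩ := gen hK hΓ hFflag hFrk ((Set.Icc (-1 : ℤ) n \ J₂).ncard)
      J₂ hJ₂sub (Set.mem_insert _ _)
      (Set.mem_insert_of_mem _ (Set.mem_insert_of_mem _ rfl)) le_rfl _ hΨ₂ hΨ₂J
    have hσ₀' : σ₀ ∈ Subgroup.closure ((⋃ l ∈ Set.Icc (-1 : ℤ) (i - 1), Rset Γ F n l) ∪
        ⋃ l ∈ Set.Icc (i + 1) n, Rset Γ F n l) := by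
      refine Subgroup.closure_mono ?_ hσ₀
      rintro w hw
      simp only [Set.mem_iUnion] at hw
      obtain ⟨l, hl, hw⟩ := hw
      have hlI := hl.1
      have hlne : l ≠ -1 ∧ l ≠ i ∧ l ≠ n := by
        refine ⟨fun h => hl.2 ?_, fun h => hl.2 ?_, fun h => hl.2 ?_⟩
        · rw [h]; exact Set.mem_insert _ _
        · rw [h]; exact Set.mem_insert_of_mem _ (Set.mem_insert _ _)
        · rw [h]; exact Set.mem_insert_of_mem _ (Set.mem_insert_of_mem _ rfl)
      rcases lt_or_gt_of_ne hlne.2.1 with h | h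
      · left
        exact Set.mem_biUnion (show l ∈ Set.Icc (-1 : ℤ) (i - 1) from ⟨hlI.1, by omega⟩) hw
      · right
        exact Set.mem_biUnion (show l ∈ Set.Icc (i + 1) n from ⟨by omega, hlI.2⟩) hw
    have hsplit := swap_split hK hΓ hFflag hFrk h0i (by omega : i ≤ n - 1) σ₀ hσ₀'
    obtain ⟨y, hy, xM, hxM, hyx⟩ := Set.mem_mul.mp hsplit
    have hfixall : ∀ k ∈ Set.Icc (-1 : ℤ) n, (σ₀⁻¹ * g : α ≃o α) (F k) = F k := by
      intro k hk
      have h1 : g (F k) ∈ ⇑g '' (F '' Set.Icc (-1 : ℤ) n) :=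
        Set.mem_image_of_mem _ (F_mem hk)
      have h2 : rk (g (F k)) = k := by rw [rk_map hK, hFrk k hk]
      have h3 : σ₀ (F k) = g (F k) := map_face hK hFflag hFrk hΨ₂ hσ₀im hk h1 h2
      show (σ₀⁻¹ : α ≃o α) (g (F k)) = F k
      rw [← h3]
      exact σ₀.symm_apply_apply _
    have hhR : (σ₀⁻¹ * g) ∈ Rset Γ F n (-1) :=
      ⟨mul_mem (inv_mem (closure_le_Γ _ hσ₀)) hgΓ, fun k hk _ => hfixall k hk⟩
    refine Set.mem_mul.mpr ⟨y, hy, xM * ((σ₀⁻¹ * g) * τ⁻¹), ?_, ?_⟩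
    · have hxM' : xM ∈ Subgroup.closure (⋃ l ∈ Set.Icc (-1 : ℤ) (j - 1), Rset Γ F n l) := by
        refine Subgroup.closure_mono (Set.biUnion_subset_biUnion_left ?_) hxM
        intro z hz
        exact ⟨hz.1, by have := hz.2; omega⟩
      have hh' : (σ₀⁻¹ * g) ∈ Subgroup.closure (⋃ l ∈ Set.Icc (-1 : ℤ) (j - 1), Rset Γ F n l) :=
        Subgroup.subset_closure
          (Set.mem_biUnion (show (-1 : ℤ) ∈ Set.Icc (-1 : ℤ) (j - 1) from ⟨le_refl _, by omega⟩) hhR)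
      exact mul_mem hxM' (mul_mem hh' (inv_mem hτM))
    · calc y * (xM * ((σ₀⁻¹ * g) * τ⁻¹)) = (y * xM) * ((σ₀⁻¹ * g) * τ⁻¹) := by group
        _ = σ₀ * ((σ₀⁻¹ * g) * τ⁻¹) := by rw [hyx]
        _ = g * τ⁻¹ := by rw [← mul_assoc, mul_inv_cancel_left]
        _ = χ := by rw [hg, mul_inv_cancel_right]
  tfae_have 2 → 3 := by
    intro h2
    obtain ⟨y, hy, xM, hxM, hyx⟩ := Set.mem_mul.mp h2
    refine ⟨y⁻¹ * φ, Set.mem_inter ?_ ?_⟩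
    · refine Set.mem_mul.mpr ⟨y⁻¹, ?_, φ, rfl, rfl⟩
      refine inv_mem (Subgroup.closure_mono (Set.biUnion_subset_biUnion_left ?_) hy)
      intro z hz
      refine ⟨⟨by have := hz.1; omega, hz.2⟩, ?_⟩
      simp only [Set.mem_singleton_iff]
      have := hz.1
      omega
    · refine Set.mem_mul.mpr ⟨xM, ?_, ψ, rfl, ?_⟩
      · refine Subgroup.closure_mono (Set.biUnion_subset_biUnion_left ?_) hxM
        intro z hz
        refine ⟨⟨hz.1, by have := hz.2; omega⟩, ?_⟩
        simp only [Set.mem_singleton_iff]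
        have := hz.2
        omega
      · have hφeq : φ = y * xM * ψ := by rw [hyx, inv_mul_cancel_right]
        rw [hφeq, mul_assoc, inv_mul_cancel_left]
  tfae_have 3 → 1 := by
    rintro ⟨γ, hγ1, hγ2⟩
    obtain ⟨g, hg, p, hp, hgp⟩ := Set.mem_mul.mp hγ1
    obtain ⟨h, hh, q, hq, hhq⟩ := Set.mem_mul.mp hγ2
    rw [Set.mem_singleton_iff] at hp hq
    rw [hp] at hgp
    rw [hq] at hhq
    have hgfix : g ∈ fixSub (F i) :=
      closure_fix hiIcc (fun hc => hc.2 rfl) hg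
    have hhfix : h ∈ fixSub (F j) :=
      closure_fix hjIcc (fun hc => hc.2 rfl) hh
    have e1 : (γ⁻¹ : α ≃o α) (F i) = (φ⁻¹ : α ≃o α) (F i) := by
      have hr : (γ⁻¹ : α ≃o α) = φ⁻¹ * g⁻¹ := by rw [← hgp, mul_inv_rev]
      rw [hr]
      show (φ⁻¹ : α ≃o α) ((g⁻¹ : α ≃o α) (F i)) = (φ⁻¹ : α ≃o α) (F i)
      rw [show (g⁻¹ : α ≃o α) (F i) = F i from (fixSub (F i)).inv_mem hgfix]
    have e2 : (γ⁻¹ : α ≃o α) (F j) = (ψ⁻¹ : α ≃o α) (F j) := by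
      have hr : (γ⁻¹ : α ≃o α) = ψ⁻¹ * h⁻¹ := by rw [← hhq, mul_inv_rev]
      rw [hr]
      show (ψ⁻¹ : α ≃o α) ((h⁻¹ : α ≃o α) (F j)) = (ψ⁻¹ : α ≃o α) (F j)
      rw [show (h⁻¹ : α ≃o α) (F j) = F j from (fixSub (F j)).inv_mem hhfix]
    show (φ⁻¹ : α ≃o α) (F i) ≤ (ψ⁻¹ : α ≃o α) (F j)
    have := (γ⁻¹ : α ≃o α).monotone (F_le hK hFflag hFrk hiIcc hjIcc hij)
    rwa [e1, e2] at this
  tfae_finish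
end

section
/- Let Γ = ⟨R_{-1}, R_0, ..., R_n⟩ be a generalized string C-group. Then for -1 ≤ i ≤ n, Γ_i := ⟨R_j : j ≠ i⟩ satisfies Γ_i = Γ_{i-1}^- Γ_{i+1}^+ = Γ_{i+1}^+ Γ_{i-1}^-, where Γ_k^- := ⟨R_j : j ≤ k⟩ and Γ_k^+ := ⟨R_j : j ≥ k⟩. -/
open Set Pointwise

/-- The distinguished subgroup `Γ_I = ⟨R_i : i ∈ I⟩` of a group with a system of
generating subgroups `R : ℤ → Subgroup G` (with the convention `Γ_∅ = R_{-1}`,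
which is harmless for nonempty `I ⊆ {-1,…,n}` since `R_{-1}` is contained in
every `R_i`). -/
def GamI {G : Type*} [Group G] (R : ℤ → Subgroup G) (I : Set ℤ) : Subgroup G :=
  R (-1) ⊔ ⨆ i ∈ I, R i

/-- `Γ_k^- = ⟨R_j : j ≤ k⟩`. -/
def Gminus {G : Type*} [Group G] (R : ℤ → Subgroup G) (k : ℤ) : Subgroup G :=
  GamI R (Set.Icc (-1) k)

/-- `Γ_k^+ = ⟨R_j : j ≥ k⟩`. -/
def Gplus {G : Type*} [Group G] (R : ℤ → Subgroup G) (n k : ℤ) : Subgroup G :=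
  GamI R (Set.Icc k n)

/-- `Γ_i = ⟨R_j : j ≠ i⟩`. -/
def Gsub {G : Type*} [Group G] (R : ℤ → Subgroup G) (n i : ℤ) : Subgroup G :=
  GamI R (Set.Icc (-1) n \ {i})

/-- A generalized string C-group of rank `n`: a group generated by subgroups
`R_{-1}, R_0, …, R_n` with `R_{-1} = R_n` a proper subgroup of each `R_i`
(`0 ≤ i ≤ n-1`), satisfying the intersection property and the commutation rules
`R_i R_j = R_j R_i` (as product sets) for non-adjacent indices. -/
structure GenStringC {G : Type*} [Group G] (n : ℤ) (R : ℤ → Subgroup G) : Prop where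
  one_le_n : 1 ≤ n
  gen_top : GamI R (Set.Icc (-1) n) = ⊤
  ends_eq : R (-1) = R n
  ends_lt : ∀ i ∈ Set.Icc (0 : ℤ) (n - 1), R (-1) < R i
  inter : ∀ I J : Set ℤ, I ⊆ Set.Icc (-1 : ℤ) n → J ⊆ Set.Icc (-1 : ℤ) n →
    GamI R I ⊓ GamI R J = GamI R (I ∩ J)
  comm : ∀ i j : ℤ, -1 ≤ i → i < j - 1 → j ≤ n →
    (↑(R i) : Set G) * ↑(R j) = (↑(R j) : Set G) * ↑(R i)

section Aux

variable {G : Type*} [Group G] (R : ℤ → Subgroup G)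

lemma r_le_gamI {I : Set ℤ} {k : ℤ} (hk : k ∈ insert (-1 : ℤ) I) :
    R k ≤ GamI R I := by
  rcases hk with rfl | hk
  · exact le_sup_left
  · exact le_trans (le_iSup₂ (f := fun j (_ : j ∈ I) => R j) k hk) le_sup_right

lemma gamI_eq_closure (I : Set ℤ) :
    GamI R I = Subgroup.closure (⋃ j ∈ insert (-1 : ℤ) I, (R j : Set G)) := by
  refine le_antisymm ?_ ((Subgroup.closure_le _).2 ?_)
  · refine sup_le ?_ (iSup₂_le fun j hj => ?_)
    · exact fun x hx => Subgroup.subset_closure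
        (Set.mem_biUnion (Set.mem_insert _ _) hx)
    · exact fun x hx => Subgroup.subset_closure
        (Set.mem_biUnion (Set.mem_insert_of_mem _ hj) hx)
  · intro x hx
    obtain ⟨k, hk, hxk⟩ := Set.mem_iUnion₂.1 hx
    exact r_le_gamI R hk hxk

lemma mem_gamI_iff {I : Set ℤ} {x : G} :
    x ∈ GamI R I ↔
      x ∈ Submonoid.closure (⋃ j ∈ insert (-1 : ℤ) I, (R j : Set G)) := by
  have hsym : (⋃ j ∈ insert (-1 : ℤ) I, (R j : Set G))⁻¹
      = ⋃ j ∈ insert (-1 : ℤ) I, (R j : Set G) := by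
    ext x
    simp only [Set.mem_inv, Set.mem_iUnion, SetLike.mem_coe]
    exact exists_congr fun j => exists_congr fun _ => inv_mem_iff
  rw [gamI_eq_closure, ← Subgroup.mem_toSubmonoid, Subgroup.closure_toSubmonoid,
    hsym, Set.union_self]

lemma gamI_sup (I J : Set ℤ) : GamI R I ⊔ GamI R J = GamI R (I ∪ J) := by
  unfold GamI
  rw [iSup_union, sup_sup_sup_comm, sup_idem]

end Aux

/-- in a generalized string C-group,
`Γ_i = Γ_{i-1}^- Γ_{i+1}^+ = Γ_{i+1}^+ Γ_{i-1}^-` as product sets. -/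
theorem gsub_eq_product {G : Type*} [Group G]
    (n : ℤ) (R : ℤ → Subgroup G) (hC : GenStringC n R)
    (i : ℤ) (hi : -1 ≤ i) (hin : i ≤ n) :
    (↑(Gsub R n i) : Set G) = ↑(Gminus R (i - 1)) * ↑(Gplus R n (i + 1)) ∧
      (↑(Gsub R n i) : Set G) = ↑(Gplus R n (i + 1)) * ↑(Gminus R (i - 1)) := by
  set A := Gminus R (i - 1) with hA
  set B := Gplus R n (i + 1) with hB
  -- `R (-1)` is contained in every `R j` with `-1 ≤ j ≤ n`.
  have hRneg : ∀ j : ℤ, -1 ≤ j → j ≤ n → R (-1) ≤ R j := by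
    intro j h1 h2
    rcases eq_or_lt_of_le h1 with rfl | h1'
    · exact le_rfl
    rcases eq_or_lt_of_le h2 with rfl | h2'
    · exact hC.ends_eq.le
    · exact (hC.ends_lt j ⟨by omega, by omega⟩).le
  -- key step 1: generators of `B` move past all of `A`.
  have key1 : ∀ j ∈ insert (-1 : ℤ) (Set.Icc (i + 1) n), ∀ a ∈ A, ∀ t ∈ R j,
      ∃ a' ∈ A, ∃ t' ∈ R j, t * a = a' * t' := by
    intro j hj a ha
    rw [hA, Gminus, mem_gamI_iff] at ha
    induction ha using Submonoid.closure_induction with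
    | mem x hx =>
      obtain ⟨k, hk, hxk⟩ := Set.mem_iUnion₂.1 hx
      intro t ht
      rcases hj with rfl | hj
      · -- j = -1 : then t ∈ R (-1) ≤ A, absorb into A
        refine ⟨t * x, mul_mem (r_le_gamI R (Set.mem_insert _ _) ht)
          (r_le_gamI R hk hxk), 1, one_mem _, (mul_one _).symm⟩
      · have hjIcc : i + 1 ≤ j ∧ j ≤ n := hj
        rcases eq_or_ne k (-1) with rfl | hk1
        · -- k = -1 : then x ∈ R (-1) ≤ R j, absorb into R j
          refine ⟨1, one_mem _, t * x, mul_mem ht (hRneg j (by omega) (by omega) hxk),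
            (one_mul _).symm⟩
        · -- generic case: use the commutation rule
          have hkIcc : k ∈ Set.Icc (-1 : ℤ) (i - 1) := by
            rcases hk with h | h
            · exact absurd h hk1
            · exact h
          have hcomm := hC.comm k j hkIcc.1 (by
            have := hkIcc.2; omega) hjIcc.2
          have : t * x ∈ (↑(R k) : Set G) * ↑(R j) := by
            rw [hcomm]
            exact Set.mul_mem_mul ht hxk
          obtain ⟨a', ha', t', ht', heq⟩ := Set.mem_mul.1 this
          exact ⟨a', r_le_gamI R (Set.mem_insert_of_mem _ hkIcc) ha', t', ht', heq.symm⟩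
    | one =>
      intro t ht
      exact ⟨1, one_mem _, t, ht, by group⟩
    | mul x y hx hy ihx ihy =>
      intro t ht
      obtain ⟨a1, ha1, t1, ht1, h1⟩ := ihx t ht
      obtain ⟨a2, ha2, t2, ht2, h2⟩ := ihy t1 ht1
      refine ⟨a1 * a2, mul_mem ha1 ha2, t2, ht2, ?_⟩
      calc t * (x * y) = (t * x) * y := by group
        _ = a1 * (t1 * y) := by rw [h1]; group
        _ = a1 * (a2 * t2) := by rw [h2]
        _ = a1 * a2 * t2 := by group
  -- key step 2: `B * A ⊆ A * B` elementwise.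
  have key2 : ∀ b ∈ B, ∀ a ∈ A, b * a ∈ (↑A * ↑B : Set G) := by
    intro b hb
    rw [hB, Gplus, mem_gamI_iff] at hb
    induction hb using Submonoid.closure_induction with
    | mem x hx =>
      obtain ⟨j, hj, hxj⟩ := Set.mem_iUnion₂.1 hx
      intro a ha
      obtain ⟨a', ha', t', ht', heq⟩ := key1 j hj a ha x hxj
      rw [heq]
      exact Set.mul_mem_mul ha' (r_le_gamI R hj ht')
    | one =>
      intro a ha
      rw [one_mul]
      exact ⟨a, ha, 1, one_mem _, mul_one a⟩
    | mul x y hx hy ihx ihy =>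
      intro a ha
      obtain ⟨a', ha', b', hb', heq⟩ := Set.mem_mul.1 (ihy a ha)
      obtain ⟨a'', ha'', b'', hb'', heq'⟩ := Set.mem_mul.1 (ihx a' ha')
      refine ⟨a'', ha'', b'' * b', mul_mem hb'' hb', ?_⟩
      calc a'' * (b'' * b') = (a'' * b'') * b' := by group
        _ = (x * a') * b' := by rw [heq']
        _ = x * (a' * b') := by group
        _ = x * (y * a) := by rw [heq]
        _ = x * y * a := by group
  -- set-level commutation of `A` and `B`.
  have hBA : (↑B * ↑A : Set G) ⊆ ↑A * ↑B := by
    rintro x hx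
    obtain ⟨b, hb, a, ha, rfl⟩ := Set.mem_mul.1 hx
    exact key2 b hb a ha
  have hAB : (↑A * ↑B : Set G) ⊆ ↑B * ↑A := by
    rintro x hx
    obtain ⟨a, ha, b, hb, rfl⟩ := Set.mem_mul.1 hx
    obtain ⟨a', ha', b', hb', heq⟩ := Set.mem_mul.1 (key2 b⁻¹ (inv_mem hb) a⁻¹ (inv_mem ha))
    refine ⟨b'⁻¹, inv_mem hb', a'⁻¹, inv_mem ha', ?_⟩
    have : (a * b)⁻¹ = a' * b' := by rw [heq]; group
    calc b'⁻¹ * a'⁻¹ = (a' * b')⁻¹ := by group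
      _ = a * b := by rw [← this, inv_inv]
  have hcommAB : (↑A * ↑B : Set G) = ↑B * ↑A := Set.Subset.antisymm hAB hBA
  -- the product set is the subgroup `A ⊔ B`.
  have hsup : (↑(A ⊔ B) : Set G) = ↑A * ↑B := by
    have hone : (1 : G) ∈ (↑A * ↑B : Set G) := ⟨1, one_mem _, 1, one_mem _, mul_one 1⟩
    have hmul : ∀ x y : G, x ∈ (↑A * ↑B : Set G) → y ∈ (↑A * ↑B : Set G) →
        x * y ∈ (↑A * ↑B : Set G) := by
      intro x y hx hy
      obtain ⟨a1, ha1, b1, hb1, rfl⟩ := Set.mem_mul.1 hx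
      obtain ⟨a2, ha2, b2, hb2, rfl⟩ := Set.mem_mul.1 hy
      obtain ⟨a', ha', b', hb', heq⟩ := Set.mem_mul.1 (key2 b1 hb1 a2 ha2)
      refine ⟨a1 * a', mul_mem ha1 ha', b' * b2, mul_mem hb' hb2, ?_⟩
      calc a1 * a' * (b' * b2) = a1 * (a' * b') * b2 := by group
        _ = a1 * (b1 * a2) * b2 := by rw [heq]
        _ = a1 * b1 * (a2 * b2) := by group
    have hinv : ∀ x : G, x ∈ (↑A * ↑B : Set G) → x⁻¹ ∈ (↑A * ↑B : Set G) := by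
      intro x hx
      obtain ⟨a, ha, b, hb, rfl⟩ := Set.mem_mul.1 hx
      have : (a * b)⁻¹ = b⁻¹ * a⁻¹ := by group
      rw [this]
      exact key2 b⁻¹ (inv_mem hb) a⁻¹ (inv_mem ha)
    let M : Subgroup G :=
      { carrier := ↑A * ↑B
        one_mem' := hone
        mul_mem' := fun {x y} hx hy => hmul x y hx hy
        inv_mem' := fun {x} hx => hinv x hx }
    refine Set.Subset.antisymm ?_ ?_
    · have hle : A ⊔ B ≤ M := by
        refine sup_le ?_ ?_
        · exact fun a ha => ⟨a, ha, 1, one_mem _, mul_one a⟩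
        · exact fun b hb => ⟨1, one_mem _, b, hb, one_mul b⟩
      exact fun x hx => hle hx
    · rintro x hx
      obtain ⟨a, ha, b, hb, rfl⟩ := Set.mem_mul.1 hx
      exact mul_mem (Subgroup.mem_sup_left ha) (Subgroup.mem_sup_right hb)
  -- identify `A ⊔ B` with `Γ_i`.
  have hGsub : Gsub R n i = A ⊔ B := by
    rw [hA, hB, Gminus, Gplus, Gsub, gamI_sup]
    congr 1
    ext x
    simp only [Set.mem_union, Set.mem_Icc, Set.mem_diff, Set.mem_singleton_iff]
    omega
  constructor
  · rw [hGsub, hsup]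
  · rw [hGsub, hsup, hcommAB]
end

section
/- Let Γ = ⟨R_{-1}, R_0, ..., R_n⟩ be a generalized string C-group. In the poset K(Γ) with i-faces the right cosets Γ_i φ and partial order Γ_i φ ≤ Γ_j ψ iff i ≤ j and φψ^{-1} ∈ Γ_{i+1}^+ Γ_{j-1}^-, the relation Γ_i φ ≤ Γ_j ψ holds if and only if i ≤ j and Γ_i φ ∩ Γ_j ψ ≠ ∅. -/
open Set Pointwise

section Helpers

variable {G : Type*} [Group G]

lemma mul_coe_of_le {A B : Subgroup G} (h : A ≤ B) :
    (A : Set G) * (B : Set G) = (B : Set G) := by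
  apply Set.Subset.antisymm
  · rintro _ ⟨a, ha, b, hb, rfl⟩
    exact mul_mem (h ha) hb
  · intro b hb
    exact ⟨1, A.one_mem, b, hb, one_mul b⟩

lemma coe_mul_of_le {A B : Subgroup G} (h : A ≤ B) :
    (B : Set G) * (A : Set G) = (B : Set G) := by
  apply Set.Subset.antisymm
  · rintro _ ⟨b, hb, a, ha, rfl⟩
    exact mul_mem hb (h ha)
  · intro b hb
    exact ⟨b, hb, 1, A.one_mem, mul_one b⟩

lemma comm_of_le {A B : Subgroup G} (h : A ≤ B) :
    (A : Set G) * (B : Set G) = (B : Set G) * (A : Set G) := by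
  rw [mul_coe_of_le h, coe_mul_of_le h]

lemma iSup_set_mul_comm {ι : Sort*} (A : ι → Subgroup G) (K : Subgroup G)
    (h : ∀ i, ((A i : Set G) * K) = (K : Set G) * A i) :
    ((⨆ i, A i : Subgroup G) : Set G) * K = (K : Set G) * (⨆ i, A i : Subgroup G) := by
  set H := (⨆ i, A i : Subgroup G) with hH
  have key : ∀ x ∈ H, ∀ b ∈ K, (x * b ∈ (K : Set G) * H) ∧ (b * x ∈ (H : Set G) * K) := by
    intro x hx
    refine Subgroup.iSup_induction (C := fun x =>
      ∀ b ∈ K, (x * b ∈ (K : Set G) * H) ∧ (b * x ∈ (H : Set G) * K)) A hx ?_ ?_ ?_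
    · intro i x hxi b hb
      constructor
      · have h1 : x * b ∈ (A i : Set G) * K := ⟨x, hxi, b, hb, rfl⟩
        rw [h i] at h1
        exact Set.mul_subset_mul_left
          (SetLike.coe_subset_coe.2 (le_iSup A i)) h1
      · have h1 : b * x ∈ (K : Set G) * A i := ⟨b, hb, x, hxi, rfl⟩
        rw [← h i] at h1
        exact Set.mul_subset_mul_right
          (SetLike.coe_subset_coe.2 (le_iSup A i)) h1
    · intro b hb
      exact ⟨by rw [one_mul]; exact ⟨b, hb, 1, H.one_mem, mul_one b⟩,
             by rw [mul_one]; exact ⟨1, H.one_mem, b, hb, one_mul b⟩⟩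
    · intro x y ihx ihy b hb
      constructor
      · obtain ⟨c, hc, h', hh', he⟩ := (ihy b hb).1
        obtain ⟨c2, hc2, h2, hh2, he2⟩ := (ihx c hc).1
        refine ⟨c2, hc2, h2 * h', mul_mem hh2 hh', ?_⟩
        replace he : c * h' = y * b := he
        replace he2 : c2 * h2 = x * c := he2
        show c2 * (h2 * h') = x * y * b
        rw [← mul_assoc, he2, mul_assoc, he, ← mul_assoc]
      · obtain ⟨h', hh', c, hc, he⟩ := (ihx b hb).2
        obtain ⟨h2, hh2, c2, hc2, he2⟩ := (ihy c hc).2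
        refine ⟨h' * h2, mul_mem hh' hh2, c2, hc2, ?_⟩
        replace he : h' * c = b * x := he
        replace he2 : h2 * c2 = c * y := he2
        show h' * h2 * c2 = b * (x * y)
        rw [mul_assoc, he2, ← mul_assoc, he, mul_assoc]
  apply Set.Subset.antisymm
  · rintro _ ⟨x, hx, b, hb, rfl⟩
    exact (key x hx b hb).1
  · rintro _ ⟨b, hb, x, hx, rfl⟩
    exact (key x hx b hb).2

lemma iSup_set_mul_comm₂ {ι κ : Sort*} (A : ι → Subgroup G) (B : κ → Subgroup G)
    (h : ∀ i j, ((A i : Set G) * B j) = (B j : Set G) * A i) :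
    ((⨆ i, A i : Subgroup G) : Set G) * (⨆ j, B j : Subgroup G) =
      ((⨆ j, B j : Subgroup G) : Set G) * (⨆ i, A i : Subgroup G) :=
  iSup_set_mul_comm A _ fun i =>
    ((iSup_set_mul_comm B (A i)) fun j => (h i j).symm).symm

lemma coe_sup_of_comm {A B : Subgroup G} (h : (A : Set G) * B = (B : Set G) * A) :
    ((A ⊔ B : Subgroup G) : Set G) = (A : Set G) * B := by
  let S : Subgroup G :=
    { carrier := (A : Set G) * B
      one_mem' := ⟨1, A.one_mem, 1, B.one_mem, one_mul 1⟩
      mul_mem' := by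
        rintro _ _ ⟨a1, ha1, b1, hb1, rfl⟩ ⟨a2, ha2, b2, hb2, rfl⟩
        have h1 : b1 * a2 ∈ (B : Set G) * A := ⟨b1, hb1, a2, ha2, rfl⟩
        rw [← h] at h1
        obtain ⟨a3, ha3, b3, hb3, he⟩ := h1
        refine ⟨a1 * a3, mul_mem ha1 ha3, b3 * b2, mul_mem hb3 hb2, ?_⟩
        replace he : a3 * b3 = b1 * a2 := he
        show a1 * a3 * (b3 * b2) = a1 * b1 * (a2 * b2)
        rw [mul_assoc, ← mul_assoc a3 b3 b2, he]
        group
      inv_mem' := by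
        rintro _ ⟨a, ha, b, hb, rfl⟩
        have h1 : b⁻¹ * a⁻¹ ∈ (B : Set G) * A := ⟨b⁻¹, inv_mem hb, a⁻¹, inv_mem ha, rfl⟩
        rw [← h] at h1
        simpa [mul_inv_rev] using h1 }
  have hA : A ≤ S := fun a ha => ⟨a, ha, 1, B.one_mem, mul_one a⟩
  have hB : B ≤ S := fun b hb => ⟨1, A.one_mem, b, hb, one_mul b⟩
  apply Set.Subset.antisymm
  · exact fun x hx => (sup_le hA hB) hx
  · rintro _ ⟨a, ha, b, hb, rfl⟩
    exact mul_mem (Subgroup.mem_sup_left ha) (Subgroup.mem_sup_right hb)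

lemma mem_mul_iff_meet (S T : Subgroup G) (φ ψ : G) :
    φ * ψ⁻¹ ∈ (S : Set G) * T ↔
      (((S : Set G) * {φ}) ∩ ((T : Set G) * {ψ})).Nonempty := by
  constructor
  · rintro ⟨a, ha, b, hb, he⟩
    replace he : a * b = φ * ψ⁻¹ := he
    have hφ : a * b * ψ = φ := by rw [he]; group
    refine ⟨a⁻¹ * φ, ⟨a⁻¹, inv_mem ha, φ, rfl, rfl⟩,
            ⟨b, hb, ψ, rfl, ?_⟩⟩
    show b * ψ = a⁻¹ * φ
    rw [← hφ]; group
  · rintro ⟨z, ⟨a, ha, w, hw, hz1⟩, ⟨b, hb, v, hv, hz2⟩⟩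
    rw [Set.mem_singleton_iff] at hw hv
    replace hz1 : a * w = z := hz1
    replace hz2 : b * v = z := hz2
    subst hw; subst hv
    refine ⟨a⁻¹, inv_mem ha, b, hb, ?_⟩
    have h1 : a * w = b * v := by rw [hz1, hz2]
    show a⁻¹ * b = w * v⁻¹
    rw [show b = a * w * v⁻¹ by rw [h1]; group]
    group

end Helpers


section Helpers2

variable {G : Type*} [Group G]

lemma GamI_eq (R : ℤ → Subgroup G) (I : Set ℤ) :
    GamI R I = ⨆ k : ↥(insert (-1 : ℤ) I), R (k : ℤ) := by
  rw [GamI, iSup_subtype'' (insert (-1 : ℤ) I) R, iSup_insert]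

lemma GamI_union (R : ℤ → Subgroup G) (I J : Set ℤ) :
    GamI R (I ∪ J) = GamI R I ⊔ GamI R J := by
  rw [GamI, GamI, GamI, iSup_union, sup_sup_distrib_left]

lemma GamI_mono (R : ℤ → Subgroup G) {I J : Set ℤ} (h : I ⊆ J) :
    GamI R I ≤ GamI R J :=
  sup_le_sup_left (biSup_mono h) _

lemma GamI_set_mul_comm (R : ℤ → Subgroup G) (I J : Set ℤ)
    (h : ∀ k ∈ insert (-1 : ℤ) I, ∀ l ∈ insert (-1 : ℤ) J,
      (R k : Set G) * R l = (R l : Set G) * R k) :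
    (GamI R I : Set G) * GamI R J = (GamI R J : Set G) * GamI R I := by
  rw [GamI_eq R I, GamI_eq R J]
  exact iSup_set_mul_comm₂ _ _ fun k l => h k k.2 l l.2

variable {n : ℤ} {R : ℤ → Subgroup G}

lemma Rneg1_le (hC : GenStringC n R) {l : ℤ} (h1 : -1 ≤ l) (h2 : l ≤ n) :
    R (-1) ≤ R l := by
  rcases eq_or_ne l n with rfl | hn
  · exact hC.ends_eq.le
  rcases eq_or_ne l (-1) with rfl | hl
  · exact le_rfl
  · exact (hC.ends_lt l ⟨by omega, by omega⟩).le

lemma comm_minus_plus (hC : GenStringC n R) (a b : ℤ)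
    (han : a ≤ n) (hb : -1 ≤ b) (hab : a + 2 ≤ b) :
    (Gminus R a : Set G) * Gplus R n b = (Gplus R n b : Set G) * Gminus R a := by
  rw [Gminus, Gplus]
  apply GamI_set_mul_comm
  intro k hk l hl
  simp only [Set.mem_insert_iff, Set.mem_Icc] at hk hl
  rcases hl with rfl | ⟨hl1, hl2⟩
  · rcases hk with rfl | ⟨hk1, hk2⟩
    · rfl
    · exact (comm_of_le (Rneg1_le hC hk1 (hk2.trans han))).symm
  · rcases hk with rfl | ⟨hk1, hk2⟩
    · exact comm_of_le (Rneg1_le hC (by omega) hl2)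
    · exact hC.comm k l hk1 (by omega) hl2

lemma Gsub_split (h1 : (-1 : ℤ) ≤ i) (h2 : i ≤ n) :
    Gsub R n i = Gminus R (i - 1) ⊔ Gplus R n (i + 1) := by
  rw [Gsub, Gminus, Gplus, ← GamI_union]
  congr 1
  ext k
  simp only [Set.mem_diff, Set.mem_Icc, Set.mem_singleton_iff, Set.mem_union]
  omega

lemma gsub_mul_gsub (hC : GenStringC n R) {i j : ℤ}
    (hi : -1 ≤ i) (hij : i ≤ j) (hj : j ≤ n) :
    (Gsub R n i : Set G) * Gsub R n j =
      (Gplus R n (i + 1) : Set G) * Gminus R (j - 1) := by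
  have hi' : i ≤ n := hij.trans hj
  have hj' : -1 ≤ j := hi.trans hij
  have ci : (Gminus R (i - 1) : Set G) * Gplus R n (i + 1) =
      (Gplus R n (i + 1) : Set G) * Gminus R (i - 1) :=
    comm_minus_plus hC _ _ (by omega) (by omega) (by omega)
  have cj : (Gminus R (j - 1) : Set G) * Gplus R n (j + 1) =
      (Gplus R n (j + 1) : Set G) * Gminus R (j - 1) :=
    comm_minus_plus hC _ _ (by omega) (by omega) (by omega)
  have exi : (Gsub R n i : Set G) =
      (Gplus R n (i + 1) : Set G) * Gminus R (i - 1) := by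
    rw [Gsub_split hi hi', sup_comm, coe_sup_of_comm ci.symm]
  have exj : (Gsub R n j : Set G) =
      (Gminus R (j - 1) : Set G) * Gplus R n (j + 1) := by
    rw [Gsub_split hj' hj, coe_sup_of_comm cj]
  have hMle : Gminus R (i - 1) ≤ Gminus R (j - 1) :=
    GamI_mono R (Set.Icc_subset_Icc_right (by omega : i - 1 ≤ j - 1))
  have hPle : Gplus R n (j + 1) ≤ Gplus R n (i + 1) :=
    GamI_mono R (Set.Icc_subset_Icc_left (by omega : i + 1 ≤ j + 1))
  rw [exi, exj, mul_assoc,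
    ← mul_assoc (Gminus R (i - 1) : Set G),
    mul_coe_of_le hMle, cj, ← mul_assoc, coe_mul_of_le hPle]

end Helpers2

/-- The set of `i`-faces of `K(Γ)`: right cosets of `Γ_i = ⟨R_k : k ≠ i⟩`. -/
def Gface {G : Type*} [Group G] (n : ℤ) (R : ℤ → Subgroup G) (i : ℤ) :=
  Quotient (QuotientGroup.rightRel (Gsub R n i))

/-- The faces of the complex `K(Γ)`: for each rank `i ∈ {-1,…,n}` the right
cosets `Γ_i φ`. -/
def KF {G : Type*} [Group G] (n : ℤ) (R : ℤ → Subgroup G) :=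
  Σ i : ↥(Set.Icc (-1 : ℤ) n), Gface n R i.1

/-- The incidence relation of `K(Γ)`:
`Γ_i φ ≤ Γ_j ψ  iff  i ≤ j and φψ⁻¹ ∈ Γ_{i+1}^+ Γ_{j-1}^-`. -/
def KGle {G : Type*} [Group G] (n : ℤ) (R : ℤ → Subgroup G)
    (x y : KF n R) : Prop :=
  x.1.1 ≤ y.1.1 ∧ ∃ φ ψ : G,
    x.2 = Quotient.mk (QuotientGroup.rightRel (Gsub R n x.1.1)) φ ∧
    y.2 = Quotient.mk (QuotientGroup.rightRel (Gsub R n y.1.1)) ψ ∧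
    φ * ψ⁻¹ ∈ (↑(Gplus R n (x.1.1 + 1)) : Set G) * ↑(Gminus R (y.1.1 - 1))

/-- Right multiplication action of `Γ` on the faces of `K(Γ)`. -/
def rmulKF {G : Type*} [Group G] (n : ℤ) (R : ℤ → Subgroup G) (g : G)
    (x : KF n R) : KF n R :=
  ⟨x.1, Quotient.map (· * g)
    (fun a b h => by
      have h' : b * a⁻¹ ∈ Gsub R n x.1.1 :=
        (QuotientGroup.rightRel_apply).1 h
      refine (QuotientGroup.rightRel_apply).2 ?_
      simpa [mul_assoc] using h') x.2⟩

/-- in `K(Γ)`, `Γ_i φ ≤ Γ_j ψ` holds if and only if `i ≤ j` and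
the right cosets `Γ_i φ` and `Γ_j ψ` intersect. -/
theorem kgle_iff_cosets_meet {G : Type*} [Group G]
    (n : ℤ) (R : ℤ → Subgroup G) (hC : GenStringC n R)
    (x y : KF n R) :
    KGle n R x y ↔
      x.1.1 ≤ y.1.1 ∧ ∃ φ ψ : G,
        x.2 = Quotient.mk (QuotientGroup.rightRel (Gsub R n x.1.1)) φ ∧
        y.2 = Quotient.mk (QuotientGroup.rightRel (Gsub R n y.1.1)) ψ ∧
        (((↑(Gsub R n x.1.1) : Set G) * {φ}) ∩
          ((↑(Gsub R n y.1.1) : Set G) * {ψ})).Nonempty := by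
  unfold KGle
  apply and_congr_right
  intro hij
  apply exists_congr; intro φ; apply exists_congr; intro ψ
  apply and_congr_right; intro _
  apply and_congr_right; intro _
  rw [← gsub_mul_gsub hC (Set.mem_Icc.mp x.1.2).1 hij (Set.mem_Icc.mp y.1.2).2]
  exact mem_mul_iff_meet _ _ φ ψ
end
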